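/- arXiv:2112.00308 — 7 statements merged into one kernel-verified Lean document; each statement's English description precedes it below -/
import Mathlib

section
/- Let N ≥ 2 be an integer, let d be a positive integer, and let z_1, …, z_N : ℕ → ℂ be sequences. Define t(k) = ∑ z_1(i_1)·z_2(i_2)⋯z_N(i_N), the sum being over all N-tuples (i_1,…,i_N) of nonnegative integers with i_1 + ⋯ + i_N = k. Suppose that for every j ∈ {1,…,N} and every k ∈ ℕ with (d−1)/N < k < d one has z_j(k) = 0. Then ∑_{k=0}^{d−1} t(k) = ∏_{j=1}^{N} ( ∑_{k=0}^{d−1} z_j(k) ). -/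
theorem stmt_0 (N d : ℕ) (hN : 2 ≤ N) (hd : 0 < d) (z : Fin N → ℕ → ℂ)
    (hz : ∀ j : Fin N, ∀ k : ℕ, ((d : ℚ) - 1) / N < (k : ℚ) → k < d → z j k = 0) :
    ∑ k ∈ Finset.range d,
        ∑ v ∈ Finset.Nat.antidiagonalTuple N k, ∏ j : Fin N, z j (v j) =
      ∏ j : Fin N, ∑ k ∈ Finset.range d, z j k := by
  classical
  have hNQ : (0:ℚ) < (N:ℚ) := by
    have : 0 < N := by omega
    exact_mod_cast this
  rw [Finset.prod_univ_sum]
  rw [← Finset.sum_biUnion]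
  · apply Finset.sum_subset
    · intro v hv
      rw [Finset.mem_biUnion] at hv
      obtain ⟨k, hk, hv⟩ := hv
      rw [Finset.Nat.mem_antidiagonalTuple] at hv
      rw [Fintype.mem_piFinset]
      intro j
      rw [Finset.mem_range] at hk ⊢
      exact lt_of_le_of_lt
        (hv ▸ Finset.single_le_sum (fun i _ => Nat.zero_le _) (Finset.mem_univ j)) hk
    · intro v hv hvn
      rw [Fintype.mem_piFinset] at hv
      simp only [Finset.mem_biUnion, Finset.mem_range,
        Finset.Nat.mem_antidiagonalTuple, not_exists, not_and] at hvn
      have hsum : d ≤ ∑ i, v i := by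
        by_contra h
        push_neg at h
        exact hvn _ h rfl
      have hex : ∃ j : Fin N, ((d:ℚ) - 1) / N < (v j : ℚ) := by
        by_contra h
        push_neg at h
        have h1 : ((∑ i, v i : ℕ) : ℚ) ≤ (N : ℚ) * (((d:ℚ) - 1) / N) := by
          push_cast
          calc ∑ i : Fin N, (v i : ℚ) ≤ ∑ _i : Fin N, ((d:ℚ) - 1) / N :=
                Finset.sum_le_sum fun i _ => h i
            _ = (N : ℚ) * (((d:ℚ) - 1) / N) := by
                simp [Finset.sum_const, mul_comm]
        rw [mul_div_cancel₀ _ (ne_of_gt hNQ)] at h1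
        have h2 : ((d:ℚ)) ≤ ((∑ i, v i : ℕ) : ℚ) := by exact_mod_cast hsum
        linarith
      obtain ⟨j, hj⟩ := hex
      exact Finset.prod_eq_zero (Finset.mem_univ j)
        (hz j (v j) hj (Finset.mem_range.mp (hv j)))
  · intro x hx y hy hxy
    apply Finset.disjoint_left.mpr
    intro v hvx hvy
    rw [Finset.Nat.mem_antidiagonalTuple] at hvx hvy
    exact hxy (hvx ▸ hvy ▸ rfl)
end

section
/- Let N ≥ 2 be an integer, let d be a positive integer, and let z_1, …, z_N : ℕ → ℂ be sequences. Define t(k) = ∑ z_1(i_1)·z_2(i_2)⋯z_N(i_N), the sum being over all N-tuples (i_1,…,i_N) of nonnegative integers with i_1 + ⋯ + i_N = k. Suppose that for every j ∈ {1,…,N} and every k ∈ ℕ with (d−1)/N < k < d one has z_j(k) = 0, and moreover that z_j(l·d + k) = z_j(l·d)·z_j(k) for every j ∈ {1,…,N} and all k, l ∈ ℕ with 0 ≤ k < d. Then for all k, l ∈ ℕ with 0 ≤ k < d, t(l·d + k) = t(k) · ∑ z_1(i_1·d)·z_2(i_2·d)⋯z_N(i_N·d), where the last sum is over all N-tuples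 (i_1,…,i_N) of nonnegative integers with i_1 + ⋯ + i_N = l. -/
theorem stmt_1 (N d : ℕ) (hN : 2 ≤ N) (hd : 0 < d) (z : Fin N → ℕ → ℂ)
    (hz : ∀ j : Fin N, ∀ k : ℕ, ((d : ℚ) - 1) / N < (k : ℚ) → k < d → z j k = 0)
    (hmul : ∀ j : Fin N, ∀ k l : ℕ, k < d → z j (l * d + k) = z j (l * d) * z j k) :
    ∀ k l : ℕ, k < d →
      ∑ v ∈ Finset.Nat.antidiagonalTuple N (l * d + k), ∏ j : Fin N, z j (v j) =
        (∑ v ∈ Finset.Nat.antidiagonalTuple N k, ∏ j : Fin N, z j (v j)) *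
          ∑ v ∈ Finset.Nat.antidiagonalTuple N l, ∏ j : Fin N, z j (v j * d) := by
  intro k l hk
  have hN0 : 0 < N := by omega
  have hsplit : ∀ (v : Fin N → ℕ) (j : Fin N),
      z j (v j) = z j (v j / d * d) * z j (v j % d) := by
    intro v j
    have := hmul j (v j % d) (v j / d) (Nat.mod_lt _ hd)
    rwa [Nat.div_add_mod'] at this
  have hsum_split : ∀ v : Fin N → ℕ, (∑ j, v j) = (∑ j, v j / d) * d + ∑ j, v j % d := by
    intro v
    rw [Finset.sum_mul, ← Finset.sum_add_distrib]
    exact Finset.sum_congr rfl fun j _ => (Nat.div_add_mod' (v j) d).symm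
  -- key : for v in LHS with nonzero product, sums of mods and divs are k and l
  have key : ∀ v : Fin N → ℕ, (∑ j, v j) = l * d + k → (∏ j : Fin N, z j (v j)) ≠ 0 →
      (∑ j, v j % d) = k ∧ (∑ j, v j / d) = l := by
    intro v hv hne
    have hmodle : ∀ j : Fin N, (v j % d) * N ≤ d - 1 := by
      intro j
      have hz0 : z j (v j % d) ≠ 0 := by
        intro h0
        exact hne (Finset.prod_eq_zero (Finset.mem_univ j)
          (by rw [hsplit v j, h0, mul_zero]))
      by_contra hle
      push_neg at hle
      apply hz0
      apply hz j (v j % d) ?_ (Nat.mod_lt _ hd)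
      rw [div_lt_iff₀ (by exact_mod_cast hN0)]
      have hcast : ((d:ℚ) - 1) = ((d - 1 : ℕ) : ℚ) := by
        push_cast [Nat.cast_sub hd]; ring
      rw [hcast]
      exact_mod_cast hle
    have hS : (∑ j, v j % d) * N ≤ (d - 1) * N := by
      rw [Finset.sum_mul]
      calc ∑ j : Fin N, (v j % d) * N ≤ ∑ _j : Fin N, (d - 1) :=
            Finset.sum_le_sum fun j _ => hmodle j
        _ = N * (d - 1) := by
            rw [Finset.sum_const, Finset.card_univ, Fintype.card_fin, smul_eq_mul]
        _ = (d - 1) * N := Nat.mul_comm _ _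
    have hSle : (∑ j, v j % d) ≤ d - 1 := Nat.le_of_mul_le_mul_right hS hN0
    have heq : (∑ j, v j / d) * d + (∑ j, v j % d) = l * d + k := by
      rw [← hsum_split v]; exact hv
    have hSk : (∑ j, v j % d) = k := by
      have h1 : ((∑ j, v j / d) * d + (∑ j, v j % d)) % d = (l * d + k) % d := by rw [heq]
      rwa [Nat.mul_add_mod', Nat.mul_add_mod', Nat.mod_eq_of_lt hk,
        Nat.mod_eq_of_lt (by omega : (∑ j, v j % d) < d)] at h1
    refine ⟨hSk, ?_⟩
    rw [hSk] at heq
    have := Nat.add_right_cancel heq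
    exact Nat.eq_of_mul_eq_mul_right hd this
  rw [Finset.sum_mul_sum, ← Finset.sum_product']
  refine Finset.sum_bij_ne_zero
    (fun v _ _ => ((fun j => v j % d), (fun j => v j / d))) ?_ ?_ ?_ ?_
  · intro v h1 h2
    rw [Finset.Nat.mem_antidiagonalTuple] at h1
    obtain ⟨hs1, hs2⟩ := key v h1 h2
    simp [Finset.mem_product, Finset.Nat.mem_antidiagonalTuple, hs1, hs2]
  · intro v1 h11 h12 v2 h21 h22 heq
    simp only [Prod.mk.injEq] at heq
    funext j
    have h1 := congrFun heq.1 j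
    have h2 := congrFun heq.2 j
    conv_lhs => rw [← Nat.div_add_mod (v1 j) d]
    rw [h1, h2, Nat.div_add_mod]
  · rintro ⟨r, q⟩ hb hgb
    rw [Finset.mem_product, Finset.Nat.mem_antidiagonalTuple,
      Finset.Nat.mem_antidiagonalTuple] at hb
    obtain ⟨hr, hq⟩ := hb
    have hrlt : ∀ j, r j < d := by
      intro j
      have : r j ≤ k := hr ▸ Finset.single_le_sum (fun i _ => Nat.zero_le _) (Finset.mem_univ j)
      omega
    refine ⟨fun j => q j * d + r j, ?_, ?_, ?_⟩
    · rw [Finset.Nat.mem_antidiagonalTuple, Finset.sum_add_distrib, ← Finset.sum_mul, hr, hq]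
    · have : (∏ j : Fin N, z j (q j * d + r j)) =
          (∏ j : Fin N, z j (r j)) * ∏ j : Fin N, z j (q j * d) := by
        rw [← Finset.prod_mul_distrib]
        exact Finset.prod_congr rfl fun j _ => by
          rw [hmul j (r j) (q j) (hrlt j)]; ring
      rw [this]
      simpa using hgb
    · simp only [Prod.mk.injEq]
      constructor
      · funext j
        show (q j * d + r j) % d = r j
        rw [Nat.mul_add_mod', Nat.mod_eq_of_lt (hrlt j)]
      · funext j
        show (q j * d + r j) / d = q j
        rw [Nat.add_comm, Nat.add_mul_div_right _ _ hd, Nat.div_eq_of_lt (hrlt j), Nat.zero_add]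
  · intro v h1 h2
    simp only
    rw [← Finset.prod_mul_distrib]
    exact Finset.prod_congr rfl fun j _ => by rw [hsplit v j]; ring
end

section
/- Let N ≥ 2 be an integer, let d be a positive integer, and let z_1, …, z_N : ℕ → ℂ be sequences. Define t(k) = ∑ z_1(i_1)·z_2(i_2)⋯z_N(i_N), the sum being over all N-tuples (i_1,…,i_N) of nonnegative integers with i_1 + ⋯ + i_N = k. Suppose that for every j ∈ {1,…,N} and every k ∈ ℕ with (d−1)/N < k < d one has z_j(k) = 0, and that z_j(l·d + k) = z_j(l·d)·z_j(k) for every j and all k, l ∈ ℕ with 0 ≤ k < d. Then for every positive multiple n of d, ∑_{k=0}^{n−1} t(k) = ( ∑_{l=0}^{n/d−1} ∑_{i_1+⋯+i_N = l} z_1(i_1·d)⋯z_N(i_N·d) ) · ( ∑_{k=0}^{d−1} t(k) ), where the inner sum is over all N-tuples (i_1,…,i_N) of nonnegative integers with i_1 + ⋯ + i_N = l. -/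
theorem stmt_2 (N d : ℕ) (hN : 2 ≤ N) (hd : 0 < d) (z : Fin N → ℕ → ℂ)
    (hz : ∀ j : Fin N, ∀ k : ℕ, ((d : ℚ) - 1) / N < (k : ℚ) → k < d → z j k = 0)
    (hmul : ∀ j : Fin N, ∀ k l : ℕ, k < d → z j (l * d + k) = z j (l * d) * z j k)
    (n : ℕ) (hn : 0 < n) (hdvd : d ∣ n) :
    ∑ k ∈ Finset.range n,
        ∑ v ∈ Finset.Nat.antidiagonalTuple N k, ∏ j : Fin N, z j (v j) =
      (∑ l ∈ Finset.range (n / d),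
          ∑ v ∈ Finset.Nat.antidiagonalTuple N l, ∏ j : Fin N, z j (v j * d)) *
        ∑ k ∈ Finset.range d,
          ∑ v ∈ Finset.Nat.antidiagonalTuple N k, ∏ j : Fin N, z j (v j) := by
  have hN0 : 0 < N := by omega
  -- key consequence of hz
  have key : ∀ (j : Fin N) (w : ℕ), w < d → z j w ≠ 0 → N * w ≤ d - 1 := by
    intro j w hw hzw
    by_contra h
    push_neg at h
    apply hzw
    apply hz j w _ hw
    rw [div_lt_iff₀ (by exact_mod_cast hN0)]
    have h' : ((d - 1 : ℕ) : ℚ) < ((N * w : ℕ) : ℚ) := by exact_mod_cast h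
    push_cast [Nat.cast_sub hd] at h' ⊢
    linarith
  obtain ⟨m, rfl⟩ := hdvd
  have hm : 0 < m := by
    rcases Nat.eq_zero_or_pos m with h | h
    · simp [h] at hn
    · exact h
  rw [Nat.mul_div_cancel_left m hd]
  rw [Finset.sum_sigma', Finset.sum_sigma', Finset.sum_sigma',
      Finset.sum_mul_sum, ← Finset.sum_product']
  refine (Finset.sum_bij_ne_zero
    (fun p _ _ => (⟨p.1.1 * d + p.2.1, fun j => p.1.2 j * d + p.2.2 j⟩ :
      Σ _ : ℕ, Fin N → ℕ)) ?_ ?_ ?_ ?_).symm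
  · -- maps into target
    rintro ⟨⟨l, u⟩, ⟨k, w⟩⟩ h₁ h₂
    simp only [Finset.mem_product, Finset.mem_sigma, Finset.mem_range,
      Finset.Nat.mem_antidiagonalTuple] at h₁ ⊢
    obtain ⟨⟨hl, hu⟩, hk, hw⟩ := h₁
    constructor
    · calc l * d + k < l * d + d := by omega
        _ = (l + 1) * d := by ring
        _ ≤ m * d := Nat.mul_le_mul_right d (by omega)
        _ = d * m := Nat.mul_comm m d
    · rw [Finset.sum_add_distrib, ← Finset.sum_mul, hu, hw]
  · -- injective
    intro p₁ h₁ _ p₂ h₂ _ hEq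
    obtain ⟨⟨l₁, u₁⟩, ⟨k₁, w₁⟩⟩ := p₁
    obtain ⟨⟨l₂, u₂⟩, ⟨k₂, w₂⟩⟩ := p₂
    simp only [Finset.mem_product, Finset.mem_sigma, Finset.mem_range,
      Finset.Nat.mem_antidiagonalTuple] at h₁ h₂
    obtain ⟨⟨hl₁, hu₁⟩, hk₁, hw₁⟩ := h₁
    obtain ⟨⟨hl₂, hu₂⟩, hk₂, hw₂⟩ := h₂
    simp only [Sigma.mk.inj_iff, heq_eq_eq] at hEq
    obtain ⟨-, hfun⟩ := hEq
    have hw1j : ∀ j, w₁ j < d := fun j => lt_of_le_of_lt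
      (hw₁ ▸ Finset.single_le_sum (fun i _ => Nat.zero_le _) (Finset.mem_univ j)) hk₁
    have hw2j : ∀ j, w₂ j < d := fun j => lt_of_le_of_lt
      (hw₂ ▸ Finset.single_le_sum (fun i _ => Nat.zero_le _) (Finset.mem_univ j)) hk₂
    have hdiv : ∀ u w : ℕ, w < d → (u * d + w) / d = u := fun u w hw => by
      rw [Nat.mul_comm, Nat.mul_add_div hd, Nat.div_eq_of_lt hw, Nat.add_zero]
    have hmod : ∀ u w : ℕ, w < d → (u * d + w) % d = w := fun u w hw => by
      rw [Nat.mul_comm, Nat.mul_add_mod, Nat.mod_eq_of_lt hw]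
    have huw : ∀ j, u₁ j = u₂ j ∧ w₁ j = w₂ j := by
      intro j
      have hc := congrFun hfun j
      constructor
      · rw [← hdiv (u₁ j) (w₁ j) (hw1j j), ← hdiv (u₂ j) (w₂ j) (hw2j j), hc]
      · rw [← hmod (u₁ j) (w₁ j) (hw1j j), ← hmod (u₂ j) (w₂ j) (hw2j j), hc]
    have hu : u₁ = u₂ := funext fun j => (huw j).1
    have hw : w₁ = w₂ := funext fun j => (huw j).2
    subst hu; subst hw
    simp only [Prod.mk.injEq, Sigma.mk.inj_iff, heq_eq_eq]
    exact ⟨⟨by rw [← hu₁, ← hu₂], trivial⟩, by rw [← hw₁, ← hw₂], trivial⟩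
  · -- surjective onto nonzero terms
    rintro ⟨k', v⟩ hb hg
    simp only [Finset.mem_sigma, Finset.mem_range,
      Finset.Nat.mem_antidiagonalTuple] at hb
    obtain ⟨hk', hv⟩ := hb
    have hnz : ∀ j, z j (v j) ≠ 0 := fun j h0 =>
      hg (Finset.prod_eq_zero (Finset.mem_univ j) h0)
    have hsplit : ∀ j, z j (v j) = z j (v j / d * d) * z j (v j % d) := by
      intro j
      conv_lhs => rw [← Nat.div_add_mod (v j) d]
      rw [Nat.mul_comm d (v j / d)]
      exact hmul j (v j % d) (v j / d) (Nat.mod_lt _ hd)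
    have hwkey : ∀ j, N * (v j % d) ≤ d - 1 := fun j =>
      key j _ (Nat.mod_lt _ hd) (fun h0 => hnz j (by rw [hsplit j, h0, mul_zero]))
    have hsumw : ∑ j : Fin N, v j % d ≤ d - 1 := by
      have : N * ∑ j : Fin N, v j % d ≤ N * (d - 1) := by
        rw [Finset.mul_sum]
        calc ∑ j : Fin N, N * (v j % d) ≤ ∑ _j : Fin N, (d - 1) :=
              Finset.sum_le_sum fun j _ => hwkey j
          _ = N * (d - 1) := by simp [Finset.sum_const, Finset.card_univ, Nat.mul_comm]
      exact Nat.le_of_mul_le_mul_left this hN0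
    have hdec : (∑ j : Fin N, v j / d) * d + ∑ j : Fin N, v j % d = k' := by
      rw [Finset.sum_mul, ← Finset.sum_add_distrib, ← hv]
      congr 1; funext j
      rw [Nat.mul_comm (v j / d) d]
      exact Nat.div_add_mod _ _
    have hsumu : ∑ j : Fin N, v j / d < m := by
      by_contra h
      push_neg at h
      have h1 : d * m ≤ (∑ j : Fin N, v j / d) * d := by
        rw [Nat.mul_comm (∑ j : Fin N, v j / d) d]; exact Nat.mul_le_mul_left d h
      omega
    have hfact : (∏ j : Fin N, z j (v j / d * d)) * ∏ j : Fin N, z j (v j % d) =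
        ∏ j : Fin N, z j (v j) := by
      rw [← Finset.prod_mul_distrib]
      exact Finset.prod_congr rfl fun j _ => (hsplit j).symm
    refine ⟨(⟨∑ j : Fin N, v j / d, fun j => v j / d⟩,
      ⟨∑ j : Fin N, v j % d, fun j => v j % d⟩), ?_, ?_, ?_⟩
    · simp only [Finset.mem_product, Finset.mem_sigma, Finset.mem_range,
        Finset.Nat.mem_antidiagonalTuple]
      exact ⟨⟨hsumu, trivial⟩, by omega, trivial⟩
    · show (∏ j : Fin N, z j (v j / d * d)) * ∏ j : Fin N, z j (v j % d) ≠ 0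
      rw [hfact]
      exact hg
    · show (⟨(∑ j : Fin N, v j / d) * d + ∑ j : Fin N, v j % d,
        fun j => v j / d * d + v j % d⟩ : Σ _ : ℕ, Fin N → ℕ) = ⟨k', v⟩
      have h1 : (fun j : Fin N => v j / d * d + v j % d) = v :=
        funext fun j => by rw [Nat.mul_comm]; exact Nat.div_add_mod _ _
      exact Sigma.ext hdec (heq_of_eq h1)
  · -- values agree
    rintro ⟨⟨l, u⟩, ⟨k, w⟩⟩ h₁ h₂
    simp only [Finset.mem_product, Finset.mem_sigma, Finset.mem_range,
      Finset.Nat.mem_antidiagonalTuple] at h₁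
    obtain ⟨⟨hl, hu⟩, hk, hw⟩ := h₁
    have hwj : ∀ j, w j < d := fun j => lt_of_le_of_lt
      (hw ▸ Finset.single_le_sum (fun i _ => Nat.zero_le _) (Finset.mem_univ j)) hk
    rw [← Finset.prod_mul_distrib]
    exact Finset.prod_congr rfl fun j _ => (hmul j (w j) (u j) (hwj j)).symm
end

section
/- If p is a prime with p ≡ 1 (mod 3), then ∑_{k=0}^{p−1} ∑_{j=0}^{k} ∑_{i=0}^{k−j} (−1)^k · ((1/3)_j^3 / (j!)^3) · ((1/3)_i^3 / (i!)^3) · ((1/3)_{k−j−i}^3 / ((k−j−i)!)^3) · (6i+1)·(6j+1)·(6(k−j−i)+1) ≡ 0 (mod p^3), where the sum is a rational number. -/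
/-- The Pochhammer symbol `(a)_k = a·(a+1)⋯(a+k-1)` for a rational `a`. -/
def poch (a : ℚ) (k : ℕ) : ℚ := ∏ j ∈ Finset.range k, (a + (j : ℚ))

/-- `A ≡ B (mod p^m)` for rationals `A`, `B`: either `A = B` or the `p`-adic
valuation of `A - B` is at least `m`. -/
def ratCongr (p : ℕ) (m : ℕ) (A B : ℚ) : Prop :=
  A = B ∨ (m : ℤ) ≤ padicValRat p (A - B)

namespace Stmt5Aux

def rr (k : ℕ) : ℚ := poch (1/3) k / (k.factorial : ℚ)

def tt (k : ℕ) : ℚ := (-1) ^ k * (6 * (k : ℚ) + 1) * (rr k) ^ 3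

lemma poch_third (k : ℕ) :
    poch (1/3) k = ((∏ j ∈ Finset.range k, (3 * j + 1) : ℕ) : ℚ) / 3 ^ k := by
  induction k with
  | zero => simp [poch]
  | succ n ih =>
    rw [poch, Finset.prod_range_succ, ← poch, ih, Finset.prod_range_succ]
    push_cast
    field_simp
    ring

lemma rr_eq (k : ℕ) :
    rr k = ((∏ j ∈ Finset.range k, (3 * j + 1) : ℕ) : ℚ) / ((3 ^ k * k.factorial : ℕ) : ℚ) := by
  rw [rr, poch_third, div_div]
  push_cast
  ring_nf

variable (p : ℕ) [hp : Fact p.Prime]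

lemma norm_pow3 (x : ℚ) : padicNorm p (x ^ 3) = (padicNorm p x) ^ 3 := by
  rw [show x ^ 3 = x * x * x by ring, padicNorm.mul, padicNorm.mul]; ring

omit hp in
lemma norm_neg_one_pow (k : ℕ) : padicNorm p ((-1 : ℚ) ^ k) = 1 := by
  rcases neg_one_pow_eq_or ℚ k with h | h <;> rw [h]
  · exact padicNorm.one
  · rw [show (-1 : ℚ) = -(1:ℚ) by ring, padicNorm.neg]; exact padicNorm.one

lemma norm_rr (hp3 : p ≠ 3) (k : ℕ) (hk : k < p) :
    padicNorm p (rr k) = padicNorm p ((∏ j ∈ Finset.range k, (3 * j + 1) : ℕ) : ℚ) := by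
  rw [rr_eq, padicNorm.div]
  have hden : ¬ p ∣ 3 ^ k * k.factorial := by
    rintro h
    rcases (Nat.Prime.dvd_mul hp.out).1 h with h | h
    · exact hp3 ((Nat.prime_dvd_prime_iff_eq hp.out (by norm_num)).1
        (hp.out.dvd_of_dvd_pow h))
    · exact absurd ((Nat.Prime.dvd_factorial hp.out).1 h) (by omega)
  rw [(padicNorm.nat_eq_one_iff _).2 hden, div_one]

lemma norm_rr_le_one (hp3 : p ≠ 3) (k : ℕ) (hk : k < p) : padicNorm p (rr k) ≤ 1 := by
  rw [norm_rr p hp3 k hk]; exact padicNorm.of_nat _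

lemma norm_rr_le_inv (hp3 : p ≠ 3) (hpm : p = 3 * (p / 3) + 1) (k : ℕ)
    (hm : p / 3 < k) (hk : k < p) : padicNorm p (rr k) ≤ (p : ℚ)⁻¹ := by
  rw [norm_rr p hp3 k hk]
  have hdvd : (p : ℤ) ∣ ((∏ j ∈ Finset.range k, (3 * j + 1) : ℕ) : ℤ) := by
    have : p ∣ ∏ j ∈ Finset.range k, (3 * j + 1) := by
      have hmem : p / 3 ∈ Finset.range k := Finset.mem_range.2 hm
      have h := Finset.dvd_prod_of_mem (fun j => 3 * j + 1) hmem
      rwa [← hpm] at h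
    exact_mod_cast this
  have := (padicNorm.dvd_iff_norm_le (p := p) (n := 1)).1 (by simpa using hdvd)
  simpa [zpow_neg, zpow_one] using this

lemma norm_tt_le_one (hp3 : p ≠ 3) (k : ℕ) (hk : k < p) : padicNorm p (tt k) ≤ 1 := by
  rw [tt, padicNorm.mul, padicNorm.mul, norm_neg_one_pow, one_mul, norm_pow3]
  have h1 : padicNorm p (6 * (k : ℚ) + 1) ≤ 1 := by
    have : (6 * (k : ℚ) + 1) = ((6 * k + 1 : ℕ) : ℚ) := by push_cast; ring
    rw [this]; exact padicNorm.of_nat _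
  have h2 := norm_rr_le_one p hp3 k hk
  have h2' := padicNorm.nonneg (p := p) (rr k)
  calc padicNorm p (6 * (k : ℚ) + 1) * padicNorm p (rr k) ^ 3
      ≤ 1 * 1 ^ 3 := by
        apply mul_le_mul h1 (pow_le_pow_left₀ h2' h2 3) (by positivity) (by norm_num)
    _ = 1 := by norm_num

lemma norm_tt_le_inv3 (hp3 : p ≠ 3) (hpm : p = 3 * (p / 3) + 1) (k : ℕ)
    (hm : p / 3 < k) (hk : k < p) : padicNorm p (tt k) ≤ (p : ℚ)⁻¹ ^ 3 := by
  rw [tt, padicNorm.mul, padicNorm.mul, norm_neg_one_pow, one_mul, norm_pow3]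
  have h1 : padicNorm p (6 * (k : ℚ) + 1) ≤ 1 := by
    have : (6 * (k : ℚ) + 1) = ((6 * k + 1 : ℕ) : ℚ) := by push_cast; ring
    rw [this]; exact padicNorm.of_nat _
  have h2 := norm_rr_le_inv p hp3 hpm k hm hk
  have h2' := padicNorm.nonneg (p := p) (rr k)
  have hpinv : (0:ℚ) ≤ (p:ℚ)⁻¹ := by positivity
  calc padicNorm p (6 * (k : ℚ) + 1) * padicNorm p (rr k) ^ 3
      ≤ 1 * ((p:ℚ)⁻¹) ^ 3 :=
        mul_le_mul h1 (pow_le_pow_left₀ h2' h2 3) (by positivity) (by norm_num)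
    _ = ((p:ℚ)⁻¹) ^ 3 := by norm_num

end Stmt5Aux

namespace Stmt5Aux

variable {q : ℕ} [hq : Fact q.Prime]

lemma norm_prod_le_one (g : ℕ → ℚ) (k : ℕ) (h : ∀ j < k, padicNorm q (g j) ≤ 1) :
    padicNorm q (∏ j ∈ Finset.range k, g j) ≤ 1 := by
  induction k with
  | zero => simp [padicNorm.one]
  | succ n ih =>
    rw [Finset.prod_range_succ, padicNorm.mul]
    have h1 := ih (fun j hj => h j (by omega))
    have h2 := h n (by omega)
    calc padicNorm q (∏ j ∈ Finset.range n, g j) * padicNorm q (g n) ≤ 1 * 1 :=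
      mul_le_mul h1 h2 (padicNorm.nonneg _) (by norm_num)
    _ = 1 := by norm_num

lemma norm_prod_sub (f g : ℕ → ℚ) (ε : ℚ) (hε : 0 ≤ ε) (k : ℕ)
    (h1 : ∀ j < k, padicNorm q (f j) ≤ 1) (h2 : ∀ j < k, padicNorm q (g j) ≤ 1)
    (h3 : ∀ j < k, padicNorm q (f j - g j) ≤ ε) :
    padicNorm q (∏ j ∈ Finset.range k, f j - ∏ j ∈ Finset.range k, g j) ≤ ε := by
  induction k with
  | zero => simpa using hε
  | succ n ih =>
    have key : ∏ j ∈ Finset.range (n+1), f j - ∏ j ∈ Finset.range (n+1), g j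
        = f n * (∏ j ∈ Finset.range n, f j - ∏ j ∈ Finset.range n, g j)
          + (f n - g n) * ∏ j ∈ Finset.range n, g j := by
      rw [Finset.prod_range_succ, Finset.prod_range_succ]; ring
    rw [key]
    refine le_trans padicNorm.nonarchimedean (max_le ?_ ?_)
    · rw [padicNorm.mul]
      calc padicNorm q (f n) * padicNorm q (∏ j ∈ Finset.range n, f j - ∏ j ∈ Finset.range n, g j)
          ≤ 1 * ε := mul_le_mul (h1 n (by omega))
            (ih (fun j hj => h1 j (by omega)) (fun j hj => h2 j (by omega))
              (fun j hj => h3 j (by omega))) (padicNorm.nonneg _) (by norm_num)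
        _ = ε := by norm_num
    · rw [padicNorm.mul]
      calc padicNorm q (f n - g n) * padicNorm q (∏ j ∈ Finset.range n, g j)
          ≤ ε * 1 := mul_le_mul (h3 n (by omega))
            (norm_prod_le_one _ _ fun j hj => h2 j (by omega)) (padicNorm.nonneg _) hε
        _ = ε := by norm_num

/-- the mod-p binomial approximation of `rr`. -/
def ww (m k : ℕ) : ℚ := (-1) ^ k * (m.choose k : ℚ)

lemma prod_sub_nat (m k : ℕ) (hk : k ≤ m) :
    ∏ j ∈ Finset.range k, ((j : ℚ) - m) = (-1) ^ k * (k.factorial * m.choose k : ℚ) := by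
  have h1 : ∏ j ∈ Finset.range k, ((j : ℚ) - m)
      = (-1) ^ k * ∏ j ∈ Finset.range k, ((m : ℚ) - j) := by
    rw [show ((-1 : ℚ)) ^ k = ∏ _j ∈ Finset.range k, (-1 : ℚ) by
        rw [Finset.prod_const, Finset.card_range], ← Finset.prod_mul_distrib]
    exact Finset.prod_congr rfl fun j _ => by ring
  have h2 : ∏ j ∈ Finset.range k, ((m : ℚ) - j) = ((m.descFactorial k : ℕ) : ℚ) := by
    rw [Nat.descFactorial_eq_prod_range, Nat.cast_prod]
    refine Finset.prod_congr rfl fun j hj => ?_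
    have : j ≤ m := le_trans (le_of_lt (Finset.mem_range.1 hj)) hk
    rw [Nat.cast_sub this]
  rw [h1, h2, Nat.descFactorial_eq_factorial_mul_choose]
  push_cast; ring

lemma ww_eq (m k : ℕ) (hk : k ≤ m) :
    ww m k = (∏ j ∈ Finset.range k, ((j : ℚ) - m)) / (k.factorial : ℚ) := by
  rw [prod_sub_nat m k hk, ww]
  have : (k.factorial : ℚ) ≠ 0 := by exact_mod_cast k.factorial_ne_zero
  field_simp

end Stmt5Aux

namespace Stmt5Aux

variable (p : ℕ) [hp : Fact p.Prime]

lemma norm_three (hp3 : p ≠ 3) : padicNorm p (3 : ℚ) = 1 := by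
  have : ((3 : ℕ) : ℚ) = (3 : ℚ) := by norm_num
  rw [← this, padicNorm.nat_eq_one_iff]
  intro h
  exact hp3 ((Nat.prime_dvd_prime_iff_eq hp.out (by norm_num)).1 h)

lemma norm_fact_eq_one (k : ℕ) (hk : k < p) : padicNorm p (k.factorial : ℚ) = 1 := by
  rw [padicNorm.nat_eq_one_iff]
  intro h
  exact absurd ((Nat.Prime.dvd_factorial hp.out).1 h) (by omega)

lemma norm_rr_sub_ww (hp3 : p ≠ 3) (m k : ℕ) (hpm : p = 3 * m + 1) (hk : k ≤ m) :
    padicNorm p (rr k - ww m k) ≤ (p : ℚ)⁻¹ := by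
  have hkp : k < p := by omega
  have hfact : (k.factorial : ℚ) ≠ 0 := by exact_mod_cast k.factorial_ne_zero
  have hre : rr k - ww m k
      = (∏ j ∈ Finset.range k, ((1:ℚ)/3 + j) - ∏ j ∈ Finset.range k, ((j : ℚ) - m))
        / (k.factorial : ℚ) := by
    rw [rr, ww_eq m k hk, poch, div_sub_div_same]
  rw [hre, padicNorm.div, norm_fact_eq_one p k hkp, div_one]
  have hpinv : (0:ℚ) ≤ (p : ℚ)⁻¹ := by positivity
  refine norm_prod_sub _ _ _ hpinv k ?_ ?_ ?_
  · intro j hj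
    have hfj : (1:ℚ)/3 + j = ((3*j+1 : ℕ) : ℚ) / 3 := by push_cast; ring
    rw [hfj, padicNorm.div, norm_three p hp3, div_one]
    exact padicNorm.of_nat _
  · intro j hj
    have : (j : ℚ) - m = -(((m - j : ℕ) : ℚ)) := by
      rw [Nat.cast_sub (by omega)]; ring
    rw [this, padicNorm.neg]
    exact padicNorm.of_nat _
  · intro j hj
    have : (1:ℚ)/3 + j - ((j : ℚ) - m) = (p : ℚ) / 3 := by
      rw [hpm]; push_cast; ring
    rw [this, padicNorm.div, norm_three p hp3, div_one, padicNorm.padicNorm_p_of_prime]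

lemma norm_ww_le_one (m k : ℕ) : padicNorm p (ww m k) ≤ 1 := by
  rw [ww, padicNorm.mul, norm_neg_one_pow, one_mul]
  exact padicNorm.of_nat _

/-- the mod-p approximation of `tt`. -/
def cc (m k : ℕ) : ℚ := (6 * (k : ℚ) + 1) * (m.choose k : ℚ) ^ 3

lemma norm_tt_sub_cc (hp3 : p ≠ 3) (m k : ℕ) (hpm : p = 3 * m + 1) (hk : k ≤ m) :
    padicNorm p (tt k - cc m k) ≤ (p : ℚ)⁻¹ := by
  have hkp : k < p := by omega
  have hre : tt k - cc m k
      = (-1) ^ k * (6 * (k : ℚ) + 1)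
        * ((rr k - ww m k) * ((rr k)^2 + rr k * ww m k + (ww m k)^2)) := by
    rw [tt, cc, ww]
    have h4 : ((-1 : ℚ) ^ k) ^ 4 = 1 := by
      rw [← pow_mul]
      exact Even.neg_one_pow ⟨2 * k, by ring⟩
    linear_combination (6 * (k : ℚ) + 1) * ((m.choose k : ℚ)) ^ 3 * h4
  rw [hre, padicNorm.mul, padicNorm.mul, padicNorm.mul, norm_neg_one_pow, one_mul]
  have h1 : padicNorm p (6 * (k : ℚ) + 1) ≤ 1 := by
    rw [show (6 * (k : ℚ) + 1) = ((6 * k + 1 : ℕ) : ℚ) by push_cast; ring]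
    exact padicNorm.of_nat _
  have h2 := norm_rr_sub_ww p hp3 m k hpm hk
  have h3 : padicNorm p ((rr k)^2 + rr k * ww m k + (ww m k)^2) ≤ 1 := by
    have hr1 := norm_rr_le_one p hp3 k hkp
    have hw1 := norm_ww_le_one p m k
    have ha : padicNorm p ((rr k)^2) ≤ 1 := by
      rw [sq, padicNorm.mul]
      exact mul_le_one₀ hr1 (padicNorm.nonneg _) hr1
    have hb : padicNorm p (rr k * ww m k) ≤ 1 := by
      rw [padicNorm.mul]
      exact mul_le_one₀ hr1 (padicNorm.nonneg _) hw1
    have hc : padicNorm p ((ww m k)^2) ≤ 1 := by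
      rw [sq, padicNorm.mul]
      exact mul_le_one₀ hw1 (padicNorm.nonneg _) hw1
    refine le_trans padicNorm.nonarchimedean (max_le (le_trans padicNorm.nonarchimedean (max_le ha hb)) hc)
  have hpinv : (0:ℚ) ≤ (p : ℚ)⁻¹ := by positivity
  calc padicNorm p (6 * (k : ℚ) + 1)
        * (padicNorm p (rr k - ww m k) * padicNorm p ((rr k)^2 + rr k * ww m k + (ww m k)^2))
      ≤ 1 * ((p:ℚ)⁻¹ * 1) := by
        refine mul_le_mul h1 ?_ (mul_nonneg (padicNorm.nonneg _) (padicNorm.nonneg _)) (by norm_num)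
        exact mul_le_mul h2 h3 (padicNorm.nonneg _) hpinv
    _ = (p:ℚ)⁻¹ := by ring

end Stmt5Aux

namespace Stmt5Aux

variable (p : ℕ) [hp : Fact p.Prime]

omit hp in
lemma sum_cc (m : ℕ) :
    ∑ k ∈ Finset.range (m + 1), cc m k
      = ((3 * m + 1 : ℕ) : ℚ) * ∑ k ∈ Finset.range (m + 1), ((m.choose k : ℚ)) ^ 3 := by
  have hrefl : ∑ k ∈ Finset.range (m + 1), cc m (m + 1 - 1 - k)
      = ∑ k ∈ Finset.range (m + 1), cc m k := Finset.sum_range_reflect _ _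
  have key : (2 : ℚ) * ∑ k ∈ Finset.range (m + 1), cc m k
      = 2 * ((3 * m + 1 : ℕ) : ℚ) * ∑ k ∈ Finset.range (m + 1), ((m.choose k : ℚ)) ^ 3 := by
    calc (2 : ℚ) * ∑ k ∈ Finset.range (m + 1), cc m k
        = ∑ k ∈ Finset.range (m + 1), cc m k
          + ∑ k ∈ Finset.range (m + 1), cc m (m + 1 - 1 - k) := by rw [hrefl]; ring
      _ = ∑ k ∈ Finset.range (m + 1), (cc m k + cc m (m - k)) := by
          rw [← Finset.sum_add_distrib]
          refine Finset.sum_congr rfl fun k _ => by norm_num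
      _ = ∑ k ∈ Finset.range (m + 1), 2 * ((3 * m + 1 : ℕ) : ℚ) * ((m.choose k : ℚ)) ^ 3 := by
          refine Finset.sum_congr rfl fun k hk => ?_
          have hkm : k ≤ m := by
            have := Finset.mem_range.1 hk; omega
          rw [cc, cc, Nat.choose_symm hkm, Nat.cast_sub hkm]
          push_cast
          ring
      _ = 2 * ((3 * m + 1 : ℕ) : ℚ) * ∑ k ∈ Finset.range (m + 1), ((m.choose k : ℚ)) ^ 3 := by
          rw [Finset.mul_sum]
  linarith

lemma norm_sum_cc (m : ℕ) (hpm : p = 3 * m + 1) :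
    padicNorm p (∑ k ∈ Finset.range (m + 1), cc m k) ≤ (p : ℚ)⁻¹ := by
  rw [sum_cc, ← hpm]
  rw [padicNorm.mul, padicNorm.padicNorm_p_of_prime]
  have h1 : padicNorm p (∑ k ∈ Finset.range (m + 1), ((m.choose k : ℚ)) ^ 3) ≤ 1 := by
    have : (∑ k ∈ Finset.range (m + 1), ((m.choose k : ℚ)) ^ 3)
        = ((∑ k ∈ Finset.range (m + 1), (m.choose k) ^ 3 : ℕ) : ℚ) := by push_cast; ring
    rw [this]; exact padicNorm.of_nat _
  have : (0:ℚ) ≤ (p:ℚ)⁻¹ := by positivity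
  calc (p:ℚ)⁻¹ * padicNorm p (∑ k ∈ Finset.range (m + 1), ((m.choose k : ℚ)) ^ 3)
      ≤ (p:ℚ)⁻¹ * 1 := by
        exact mul_le_mul_of_nonneg_left h1 this
    _ = (p:ℚ)⁻¹ := by ring

lemma norm_T_le (hp3 : p ≠ 3) (m : ℕ) (hpm : p = 3 * m + 1) :
    padicNorm p (∑ k ∈ Finset.range p, tt k) ≤ (p : ℚ)⁻¹ := by
  have hpinv : (0:ℚ) ≤ (p : ℚ)⁻¹ := by positivity
  have hsplit : ∑ k ∈ Finset.range p, tt k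
      = (∑ k ∈ Finset.range (m + 1), tt k) + ∑ k ∈ Finset.Ico (m + 1) p, tt k := by
    rw [Finset.range_eq_Ico, ← Finset.sum_Ico_consecutive _ (by omega : 0 ≤ m + 1) (by omega : m + 1 ≤ p), Finset.range_eq_Ico]
  rw [hsplit]
  refine le_trans padicNorm.nonarchimedean (max_le ?_ ?_)
  · have hA : ∑ k ∈ Finset.range (m + 1), tt k
        = (∑ k ∈ Finset.range (m + 1), cc m k)
          + ∑ k ∈ Finset.range (m + 1), (tt k - cc m k) := by
      rw [← Finset.sum_add_distrib]
      exact Finset.sum_congr rfl fun k _ => by ring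
    rw [hA]
    refine le_trans padicNorm.nonarchimedean (max_le (norm_sum_cc p m hpm) ?_)
    refine padicNorm.sum_le' (fun k hk => ?_) hpinv
    exact norm_tt_sub_cc p hp3 m k hpm (by have := Finset.mem_range.1 hk; omega)
  · refine padicNorm.sum_le' (fun k hk => ?_) hpinv
    have hk' := Finset.mem_Ico.1 hk
    have h := norm_tt_le_inv3 p hp3 (by omega) k (by omega) hk'.2
    refine le_trans h ?_
    have h1 : (p:ℚ)⁻¹ ≤ 1 := by
      rw [inv_le_one_iff₀]
      right; exact_mod_cast hp.out.one_lt.le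
    calc ((p:ℚ)⁻¹) ^ 3 ≤ ((p:ℚ)⁻¹) ^ 1 := pow_le_pow_of_le_one hpinv h1 (by norm_num)
      _ = (p:ℚ)⁻¹ := pow_one _

end Stmt5Aux

namespace Stmt5Aux

def GG : ℕ × ℕ × ℕ → ℚ := fun x => tt x.1 * tt x.2.1 * tt x.2.2

lemma inner_eq (p k : ℕ) (hk : k < p) :
    ∑ j ∈ Finset.range (k+1), ∑ i ∈ Finset.range (k-j+1), tt i * tt j * tt (k-j-i)
      = ∑ x ∈ ((Finset.range p ×ˢ Finset.range p ×ˢ Finset.range p).filter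
          fun x => x.1 + x.2.1 + x.2.2 = k), GG x := by
  have h1 : ∑ x ∈ ((Finset.range p ×ˢ Finset.range p ×ˢ Finset.range p).filter
          fun x => x.1 + x.2.1 + x.2.2 = k), GG x
      = ∑ x ∈ (Finset.range (k+1)).sigma (fun j => Finset.range (k-j+1)),
          tt x.2 * tt x.1 * tt (k - x.1 - x.2) := by
    refine Finset.sum_nbij' (i := fun y : ℕ × ℕ × ℕ => (⟨y.2.1, y.1⟩ : Σ _ : ℕ, ℕ))
      (j := fun x : Σ _ : ℕ, ℕ => ((x.2, x.1, k - x.1 - x.2) : ℕ × ℕ × ℕ)) ?_ ?_ ?_ ?_ ?_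
    · intro b hb
      simp only [Finset.mem_filter, Finset.mem_product, Finset.mem_range] at hb
      simp only [Finset.mem_sigma, Finset.mem_range]
      omega
    · intro a ha
      simp only [Finset.mem_sigma, Finset.mem_range] at ha
      simp only [Finset.mem_filter, Finset.mem_product, Finset.mem_range]
      refine ⟨⟨by omega, by omega, by omega⟩, by omega⟩
    · intro b hb
      simp only [Finset.mem_filter, Finset.mem_product, Finset.mem_range] at hb
      have h2 : k - b.2.1 - b.1 = b.2.2 := by omega
      simp only [h2]
    · intro a _
      rfl
    · intro b hb
      simp only [Finset.mem_filter, Finset.mem_product, Finset.mem_range] at hb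
      simp only [GG]
      have h2 : k - b.2.1 - b.1 = b.2.2 := by omega
      rw [h2]
  rw [h1, Finset.sum_sigma]

lemma S_eq (p : ℕ) :
    ∑ k ∈ Finset.range p, ∑ j ∈ Finset.range (k+1), ∑ i ∈ Finset.range (k-j+1),
        tt i * tt j * tt (k-j-i)
      = ∑ x ∈ ((Finset.range p ×ˢ Finset.range p ×ˢ Finset.range p).filter
          fun x => x.1 + x.2.1 + x.2.2 < p), GG x := by
  rw [← Finset.sum_fiberwise_of_maps_to
      (g := fun x : ℕ × ℕ × ℕ => x.1 + x.2.1 + x.2.2) (t := Finset.range p)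
      (fun x hx => by
        simp only [Finset.mem_filter] at hx
        exact Finset.mem_range.2 hx.2) GG]
  refine Finset.sum_congr rfl fun k hk => ?_
  have hkp := Finset.mem_range.1 hk
  rw [inner_eq p k hkp]
  congr 1
  rw [Finset.filter_filter]
  exact Finset.filter_congr fun x hx => by omega

lemma T3_eq (p : ℕ) :
    (∑ k ∈ Finset.range p, tt k) ^ 3
      = ∑ x ∈ (Finset.range p ×ˢ Finset.range p ×ˢ Finset.range p), GG x := by
  rw [Finset.sum_product]
  have h0 : ∀ i, ∑ y ∈ Finset.range p ×ˢ Finset.range p, GG (i, y)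
      = ∑ j ∈ Finset.range p, ∑ l ∈ Finset.range p, tt i * tt j * tt l := by
    intro i
    rw [Finset.sum_product]
    rfl
  simp only [h0]
  rw [show (∑ k ∈ Finset.range p, tt k) ^ 3
      = (∑ k ∈ Finset.range p, tt k) * (∑ k ∈ Finset.range p, tt k)
        * (∑ k ∈ Finset.range p, tt k) by ring]
  simp only [Finset.sum_mul, Finset.mul_sum]
  refine Finset.sum_congr rfl fun i _ => Finset.sum_congr rfl fun j _ =>
    Finset.sum_congr rfl fun l _ => by ring

end Stmt5Aux


open Stmt5Aux in
theorem stmt_5 (p : ℕ) (hp : p.Prime) (hmod : p % 3 = 1) :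
    ratCongr p 3
      (∑ k ∈ Finset.range p, ∑ j ∈ Finset.range (k + 1), ∑ i ∈ Finset.range (k - j + 1),
        (-1 : ℚ) ^ k * ((poch (1/3) (j)) ^ 3 / ((j).factorial : ℚ) ^ 3) *
          ((poch (1/3) (i)) ^ 3 / ((i).factorial : ℚ) ^ 3) *
          ((poch (1/3) (k - j - i)) ^ 3 / ((k - j - i).factorial : ℚ) ^ 3) *
          (6 * ((i : ℕ) : ℚ) + 1) * (6 * ((j : ℕ) : ℚ) + 1) * (6 * ((k - j - i : ℕ) : ℚ) + 1))
      0 := by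
  haveI : Fact p.Prime := ⟨hp⟩
  have hp2 : 2 ≤ p := hp.two_le
  set m : ℕ := p / 3 with hm
  have hpm : p = 3 * m + 1 := by omega
  have hp3 : p ≠ 3 := by omega
  have hpinv : (0:ℚ) ≤ (p:ℚ)⁻¹ := by positivity
  set U : Finset (ℕ × ℕ × ℕ) := Finset.range p ×ˢ Finset.range p ×ˢ Finset.range p with hU
  -- Step 1: identify the statement sum with the `tt` triple sum
  have step1 : (∑ k ∈ Finset.range p, ∑ j ∈ Finset.range (k + 1), ∑ i ∈ Finset.range (k - j + 1),
        (-1 : ℚ) ^ k * ((poch (1/3) (j)) ^ 3 / ((j).factorial : ℚ) ^ 3) *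
          ((poch (1/3) (i)) ^ 3 / ((i).factorial : ℚ) ^ 3) *
          ((poch (1/3) (k - j - i)) ^ 3 / ((k - j - i).factorial : ℚ) ^ 3) *
          (6 * ((i : ℕ) : ℚ) + 1) * (6 * ((j : ℕ) : ℚ) + 1) * (6 * ((k - j - i : ℕ) : ℚ) + 1))
      = ∑ k ∈ Finset.range p, ∑ j ∈ Finset.range (k+1), ∑ i ∈ Finset.range (k-j+1),
          tt i * tt j * tt (k-j-i) := by
    refine Finset.sum_congr rfl fun k hk => Finset.sum_congr rfl fun j hj =>
      Finset.sum_congr rfl fun i hi => ?_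
    have hjk := Finset.mem_range.1 hj
    have hik := Finset.mem_range.1 hi
    have hsign : ((-1 : ℚ)) ^ k = (-1) ^ i * (-1) ^ j * (-1) ^ (k - j - i) := by
      rw [← pow_add, ← pow_add]
      congr 1
      omega
    rw [hsign]
    simp only [tt, rr]
    ring
  rw [step1]
  rw [S_eq p, ← hU]
  -- Step 2: decomposition S = T^3 - D
  have hsplit := Finset.sum_filter_add_sum_filter_not U
    (fun x : ℕ × ℕ × ℕ => x.1 + x.2.1 + x.2.2 < p) GG
  have hT3 := T3_eq p
  rw [← hU] at hT3
  -- Step 3: norm bound for the tail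
  have hkey3 : padicNorm p (∑ x ∈ U.filter
      (fun x : ℕ × ℕ × ℕ => ¬ x.1 + x.2.1 + x.2.2 < p), GG x) ≤ ((p:ℚ)⁻¹) ^ 3 := by
    refine padicNorm.sum_le' (fun x hx => ?_) (by positivity)
    simp only [hU, Finset.mem_filter, Finset.mem_product, Finset.mem_range] at hx
    obtain ⟨⟨ha, hb, hc⟩, hsum⟩ := hx
    have hm3 : p = 3 * (p / 3) + 1 := by omega
    simp only [GG]
    rw [padicNorm.mul, padicNorm.mul]
    have n1 := padicNorm.nonneg (p := p) (tt x.1)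
    have n2 := padicNorm.nonneg (p := p) (tt x.2.1)
    have n3 := padicNorm.nonneg (p := p) (tt x.2.2)
    have o1 := norm_tt_le_one p hp3 x.1 ha
    have o2 := norm_tt_le_one p hp3 x.2.1 hb
    have o3 := norm_tt_le_one p hp3 x.2.2 hc
    have hε : (0:ℚ) ≤ ((p:ℚ)⁻¹) ^ 3 := by positivity
    rcases (show p / 3 < x.1 ∨ p / 3 < x.2.1 ∨ p / 3 < x.2.2 by omega) with h | h | h
    · have hb1 := norm_tt_le_inv3 p hp3 hm3 x.1 h ha
      calc padicNorm p (tt x.1) * padicNorm p (tt x.2.1) * padicNorm p (tt x.2.2)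
          ≤ ((p:ℚ)⁻¹)^3 * 1 * 1 := by
            refine mul_le_mul (mul_le_mul hb1 o2 n2 hε) o3 n3 (by positivity)
        _ = ((p:ℚ)⁻¹)^3 := by ring
    · have hb1 := norm_tt_le_inv3 p hp3 hm3 x.2.1 h hb
      calc padicNorm p (tt x.1) * padicNorm p (tt x.2.1) * padicNorm p (tt x.2.2)
          ≤ 1 * ((p:ℚ)⁻¹)^3 * 1 := by
            refine mul_le_mul (mul_le_mul o1 hb1 n2 (by norm_num)) o3 n3 (by positivity)
        _ = ((p:ℚ)⁻¹)^3 := by ring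
    · have hb1 := norm_tt_le_inv3 p hp3 hm3 x.2.2 h hc
      calc padicNorm p (tt x.1) * padicNorm p (tt x.2.1) * padicNorm p (tt x.2.2)
          ≤ 1 * 1 * ((p:ℚ)⁻¹)^3 := by
            refine mul_le_mul (mul_le_mul o1 o2 n2 (by norm_num)) hb1 n3 (by norm_num)
        _ = ((p:ℚ)⁻¹)^3 := by ring
  -- Step 4: norm bound for T^3
  have hkeyT : padicNorm p ((∑ k ∈ Finset.range p, tt k) ^ 3) ≤ ((p:ℚ)⁻¹) ^ 3 := by
    rw [norm_pow3]
    exact pow_le_pow_left₀ (padicNorm.nonneg _) (norm_T_le p hp3 m hpm) 3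
  -- Step 5: combine
  have hSnorm : padicNorm p (∑ x ∈ U.filter
      (fun x : ℕ × ℕ × ℕ => x.1 + x.2.1 + x.2.2 < p), GG x) ≤ ((p:ℚ)⁻¹) ^ 3 := by
    have hrw : (∑ x ∈ U.filter (fun x : ℕ × ℕ × ℕ => x.1 + x.2.1 + x.2.2 < p), GG x)
        = (∑ k ∈ Finset.range p, tt k) ^ 3
          - ∑ x ∈ U.filter (fun x : ℕ × ℕ × ℕ => ¬ x.1 + x.2.1 + x.2.2 < p), GG x := by
      rw [hT3, ← hsplit]; ring
    rw [hrw]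
    exact le_trans padicNorm.sub (max_le hkeyT hkey3)
  -- Step 6: conclude
  rcases eq_or_ne (∑ x ∈ U.filter
      (fun x : ℕ × ℕ × ℕ => x.1 + x.2.1 + x.2.2 < p), GG x) 0 with h0 | h0
  · exact Or.inl h0
  · right
    rw [sub_zero]
    rw [padicNorm.eq_zpow_of_nonzero h0] at hSnorm
    have hcast : ((p:ℚ)⁻¹) ^ 3 = (p:ℚ) ^ (-(3:ℤ)) := by
      rw [inv_pow, ← zpow_natCast, ← zpow_neg]
      norm_num
    rw [hcast] at hSnorm
    have h1p : (1:ℚ) < (p:ℚ) := by exact_mod_cast hp.one_lt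
    have hle := (zpow_le_zpow_iff_right₀ h1p).1 hSnorm
    push_cast
    omega
end

section
/- If p is a prime with p ≡ 1 (mod 4), then both of the following rational numbers are ≡ 0 (mod p^3): (i) ∑_{k=0}^{p−1} ∑_{j=0}^{k} ∑_{i=0}^{k−j} (−1)^k · ((1/4)_j^3/(j!)^3)·((1/4)_i^3/(i!)^3)·((1/4)_{k−j−i}^3/((k−j−i)!)^3)·(8i+1)(8j+1)(8(k−j−i)+1); and (ii) ∑_{k=0}^{p−1} ∑_{j=0}^{k} ∑_{i=0}^{k−j} ∑_{h=0}^{k−j−i} (−1)^k · ((1/4)_j^3/(j!)^3)·((1/4)_i^3/(i!)^3)·((1/4)_h^3/(h!)^3)·((1/4)_{k−j−i−h}^3/((k−j−i−h)!)^3)·(8i+1)(8j+1)(8h+1)(8(k−j−i−h)+1). -/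
namespace Stmt7Aux

open Finset

/-- Truncated Cauchy product equals product of sums when supports are small. -/
theorem conv_eq {R : Type*} [CommRing R] (f g : ℕ → R) {a b n : ℕ}
    (hf : ∀ j, a < j → f j = 0) (hg : ∀ j, b < j → g j = 0) (hn : a + b < n) :
    ∑ k ∈ range n, ∑ j ∈ range (k + 1), f j * g (k - j)
      = (∑ j ∈ range n, f j) * (∑ j ∈ range n, g j) := by
  have h1 : ∑ k ∈ range n, ∑ j ∈ range (k + 1), f j * g (k - j)
      = ∑ x ∈ (range n).sigma (fun k => range (k + 1)), f x.2 * g (x.1 - x.2) :=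
    (Finset.sum_sigma (range n) (fun k => range (k + 1)) (fun x => f x.2 * g (x.1 - x.2))).symm
  have h2 : (∑ j ∈ range n, f j) * (∑ j ∈ range n, g j)
      = ∑ x ∈ (range n) ×ˢ (range n), f x.1 * g x.2 := by
    rw [Finset.sum_mul_sum, ← Finset.sum_product']
  rw [h1, h2]
  refine Finset.sum_bij_ne_zero (fun x _ _ => (x.2, x.1 - x.2)) ?_ ?_ ?_ ?_
  · rintro ⟨k, j⟩ hmem hne
    simp only [Finset.mem_sigma, Finset.mem_range] at hmem
    simp only [Finset.mem_product, Finset.mem_range]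
    omega
  · rintro ⟨k₁, j₁⟩ h₁ h₁' ⟨k₂, j₂⟩ h₂ h₂' heq
    simp only [Finset.mem_sigma, Finset.mem_range] at h₁ h₂
    simp only [Prod.mk.injEq] at heq
    obtain ⟨h3, h4⟩ := heq
    have hk : k₁ = k₂ := by omega
    subst hk; subst h3; rfl
  · rintro ⟨j, i⟩ hmem hne
    simp only [Finset.mem_product, Finset.mem_range] at hmem
    have hj : j ≤ a := by
      by_contra h; push_neg at h; rw [hf j h, zero_mul] at hne; exact hne rfl
    have hi : i ≤ b := by
      by_contra h; push_neg at h; rw [hg i h, mul_zero] at hne; exact hne rfl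
    refine ⟨⟨j + i, j⟩, ?_, ?_, ?_⟩
    · simp only [Finset.mem_sigma, Finset.mem_range]; omega
    · simpa [Nat.add_sub_cancel_left] using hne
    · simp [Nat.add_sub_cancel_left]
  · rintro ⟨k, j⟩ hmem hne; rfl

variable {p : ℕ} [hp : Fact p.Prime]

def aa (j : ℕ) : ℚ :=
  (-1) ^ j * ((poch (1/4) j) ^ 3 / (j.factorial : ℚ) ^ 3) * (8 * (j : ℚ) + 1)

def ff (M j : ℕ) : ℚ := if j ≤ M then aa j else 0

theorem norm_pow (q : ℚ) (n : ℕ) : padicNorm p (q ^ n) = padicNorm p q ^ n := by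
  induction n with
  | zero => simp [padicNorm.one]
  | succ n ih => rw [pow_succ, pow_succ, padicNorm.mul, ih]

theorem norm_mul_le {a b x y : ℚ} (ha : padicNorm p a ≤ x) (hb : padicNorm p b ≤ y) :
    padicNorm p (a * b) ≤ x * y := by
  rw [padicNorm.mul]
  exact mul_le_mul ha hb (padicNorm.nonneg _) ((padicNorm.nonneg _).trans ha)

theorem norm_nat_eq_one {n : ℕ} (h : ¬ p ∣ n) : padicNorm p (n : ℚ) = 1 :=
  (padicNorm.nat_eq_one_iff n).mpr h

theorem norm_factorial {j : ℕ} (hj : j < p) : padicNorm p ((j.factorial : ℕ) : ℚ) = 1 :=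
  norm_nat_eq_one (by rw [hp.out.dvd_factorial]; omega)

theorem norm_prod_le_one {ι : Type*} (s : Finset ι) (f : ι → ℚ)
    (h : ∀ i ∈ s, padicNorm p (f i) ≤ 1) : padicNorm p (∏ i ∈ s, f i) ≤ 1 := by
  refine Finset.prod_induction f (fun q => padicNorm p q ≤ 1) ?_ (by simp [padicNorm.one]) h
  intro a b ha hb
  rw [padicNorm.mul]
  exact mul_le_one₀ ha (padicNorm.nonneg _) hb

theorem prod_close {ι : Type*} (s : Finset ι) (u v : ι → ℚ) {t : ℚ} (ht0 : 0 ≤ t)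
    (hu : ∀ i ∈ s, padicNorm p (u i) ≤ 1) (hv : ∀ i ∈ s, padicNorm p (v i) ≤ 1)
    (huv : ∀ i ∈ s, padicNorm p (u i - v i) ≤ t) :
    padicNorm p (∏ i ∈ s, u i - ∏ i ∈ s, v i) ≤ t := by
  classical
  induction s using Finset.cons_induction with
  | empty => simpa [padicNorm.zero] using ht0
  | cons a s ha ih =>
    rw [Finset.prod_cons, Finset.prod_cons]
    have key : u a * ∏ i ∈ s, u i - v a * ∏ i ∈ s, v i
        = (u a - v a) * ∏ i ∈ s, u i + v a * (∏ i ∈ s, u i - ∏ i ∈ s, v i) := by ring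
    rw [key]
    refine le_trans padicNorm.nonarchimedean (max_le ?_ ?_)
    · have := norm_mul_le (huv a (Finset.mem_cons_self a s))
        (norm_prod_le_one s u (fun i hi => hu i (Finset.mem_cons_of_mem hi)))
      simpa using this
    · have := norm_mul_le (hv a (Finset.mem_cons_self a s))
        (ih (fun i hi => hu i (Finset.mem_cons_of_mem hi))
            (fun i hi => hv i (Finset.mem_cons_of_mem hi))
            (fun i hi => huv i (Finset.mem_cons_of_mem hi)))
      simpa using this

theorem norm_four (hmod : p % 4 = 1) : padicNorm p (4 : ℚ) = 1 := by
  have hp5 : 5 ≤ p := by have := hp.out.two_le; omega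
  have h4 : ((4 : ℕ) : ℚ) = (4 : ℚ) := by norm_num
  rw [← h4]
  exact norm_nat_eq_one (fun h => by have := Nat.le_of_dvd (by norm_num) h; omega)

theorem norm_factor (hmod : p % 4 = 1) (i : ℕ) : padicNorm p ((1/4 : ℚ) + (i : ℚ)) ≤ 1 := by
  have h : (1/4 : ℚ) + i = ((4 * i + 1 : ℕ) : ℚ) / 4 := by push_cast; ring
  rw [h, padicNorm.div, norm_four hmod, div_one]
  exact padicNorm.of_nat _

theorem norm_poch (hmod : p % 4 = 1) (j : ℕ) : padicNorm p (poch (1/4) j) ≤ 1 := by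
  rw [poch]
  exact norm_prod_le_one _ _ (fun i _ => norm_factor hmod i)

theorem norm_aa (hmod : p % 4 = 1) {j : ℕ} (hj : j < p) : padicNorm p (aa j) ≤ 1 := by
  have h1 : padicNorm p ((-1 : ℚ) ^ j) = 1 := by
    rw [norm_pow, padicNorm.neg, padicNorm.one, one_pow]
  have h2 : padicNorm p ((poch (1/4) j) ^ 3 / (j.factorial : ℚ) ^ 3) ≤ 1 := by
    rw [padicNorm.div, norm_pow, norm_pow, norm_factorial hj, one_pow, div_one]
    exact pow_le_one₀ (padicNorm.nonneg _) (norm_poch hmod j)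
  have h3 : padicNorm p (8 * (j : ℚ) + 1) ≤ 1 := by
    have h : (8 : ℚ) * j + 1 = ((8 * j + 1 : ℕ) : ℚ) := by push_cast; ring
    rw [h]; exact padicNorm.of_nat _
  calc padicNorm p (aa j) ≤ (1 * 1) * 1 := by
        rw [aa]; exact norm_mul_le (norm_mul_le (le_of_eq h1) h2) h3
    _ = 1 := by norm_num

theorem pow3_eq : ((p : ℚ))^(-3 : ℤ) = ((p : ℚ)⁻¹)^3 := by
  rw [inv_pow, zpow_neg, show (3:ℤ) = ((3:ℕ):ℤ) by norm_num, zpow_natCast]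

theorem norm_aa_high (hmod : p % 4 = 1) {j : ℕ} (hMj : p / 4 < j) (hj : j < p) :
    padicNorm p (aa j) ≤ (p : ℚ) ^ (-3 : ℤ) := by
  have hp5 : 5 ≤ p := by have := hp.out.two_le; omega
  have hpM : p = 4 * (p / 4) + 1 := by omega
  have hmem : p / 4 ∈ range j := mem_range.2 hMj
  have hfac : (1/4 : ℚ) + ((p / 4 : ℕ) : ℚ) = (p : ℚ) / 4 := by
    have hq : (p : ℚ) = 4 * ((p / 4 : ℕ) : ℚ) + 1 := by exact_mod_cast hpM
    rw [hq]; ring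
  have hnf : padicNorm p ((1/4 : ℚ) + ((p / 4 : ℕ) : ℚ)) = (p : ℚ)⁻¹ := by
    rw [hfac, padicNorm.div, padicNorm.padicNorm_p_of_prime, norm_four hmod, div_one]
  have hpoch : padicNorm p (poch (1/4) j) ≤ (p : ℚ)⁻¹ := by
    rw [poch, ← Finset.mul_prod_erase _ _ hmem]
    have := norm_mul_le (le_of_eq hnf)
      (norm_prod_le_one ((range j).erase (p/4)) (fun i => (1/4 : ℚ) + (i:ℚ))
        (fun i _ => norm_factor hmod i))
    simpa using this
  have h1 : padicNorm p ((-1 : ℚ) ^ j) = 1 := by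
    rw [norm_pow, padicNorm.neg, padicNorm.one, one_pow]
  have h2 : padicNorm p ((poch (1/4) j) ^ 3 / (j.factorial : ℚ) ^ 3) ≤ ((p:ℚ)⁻¹)^3 := by
    rw [padicNorm.div, norm_pow, norm_pow, norm_factorial hj, one_pow, div_one]
    exact pow_le_pow_left₀ (padicNorm.nonneg _) hpoch 3
  have h3 : padicNorm p (8 * (j : ℚ) + 1) ≤ 1 := by
    have h : (8 : ℚ) * j + 1 = ((8 * j + 1 : ℕ) : ℚ) := by push_cast; ring
    rw [h]; exact padicNorm.of_nat _
  calc padicNorm p (aa j) ≤ (1 * ((p:ℚ)⁻¹)^3) * 1 := by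
        rw [aa]; exact norm_mul_le (norm_mul_le (le_of_eq h1) h2) h3
    _ = (p : ℚ) ^ (-3 : ℤ) := by rw [pow3_eq]; ring

theorem norm_ff (hmod : p % 4 = 1) (j : ℕ) : padicNorm p (ff (p/4) j) ≤ 1 := by
  have hp5 : 5 ≤ p := by have := hp.out.two_le; omega
  rw [ff]
  split
  · exact norm_aa hmod (by omega)
  · simp [padicNorm.zero]

theorem norm_diff (hmod : p % 4 = 1) {j : ℕ} (hj : j < p) :
    padicNorm p (aa j - ff (p/4) j) ≤ (p : ℚ) ^ (-3 : ℤ) := by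
  rw [ff]
  split
  · simp only [sub_self, padicNorm.zero]
    positivity
  · rw [sub_zero]
    exact norm_aa_high hmod (by omega) hj

theorem sum_id (M : ℕ) :
    2 * (∑ j ∈ range (M+1), (8*j+1) * (M.choose j)^3)
      = 2 * ((4*M+1) * ∑ j ∈ range (M+1), (M.choose j)^3) := by
  have hrefl : ∑ j ∈ range (M+1), (8*j+1) * (M.choose j)^3
      = ∑ j ∈ range (M+1), (8*(M-j)+1) * (M.choose (M-j))^3 := by
    rw [← Finset.sum_range_reflect (fun j => (8*(M-j)+1) * (M.choose (M-j))^3) (M+1)]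
    apply Finset.sum_congr rfl
    intro j hj
    rw [mem_range] at hj
    rw [show M + 1 - 1 - j = M - j from by omega, show M - (M - j) = j from by omega]
  calc 2 * ∑ j ∈ range (M+1), (8*j+1) * (M.choose j)^3
      = ∑ j ∈ range (M+1), (8*j+1) * (M.choose j)^3
        + ∑ j ∈ range (M+1), (8*(M-j)+1) * (M.choose (M-j))^3 := by rw [← hrefl]; ring
    _ = ∑ j ∈ range (M+1), ((8*j+1) * (M.choose j)^3 + (8*(M-j)+1) * (M.choose (M-j))^3) :=
        (Finset.sum_add_distrib).symm
    _ = ∑ j ∈ range (M+1), (8*M+2) * (M.choose j)^3 := by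
        apply Finset.sum_congr rfl
        intro j hj
        rw [mem_range] at hj
        rw [Nat.choose_symm (by omega), ← add_mul]
        congr 1
        omega
    _ = (8*M+2) * ∑ j ∈ range (M+1), (M.choose j)^3 := by rw [Finset.mul_sum]
    _ = 2 * ((4*M+1) * ∑ j ∈ range (M+1), (M.choose j)^3) := by ring

theorem norm_ac (hmod : p % 4 = 1) {j : ℕ} (hj : j ≤ p / 4) :
    padicNorm p (aa j - (((8*j+1) * ((p/4).choose j)^3 : ℕ) : ℚ)) ≤ (p : ℚ)⁻¹ := by
  have hp5 : 5 ≤ p := by have := hp.out.two_le; omega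
  have hpM : p = 4 * (p/4) + 1 := by omega
  set M := p / 4 with hMdef
  have hjp : j < p := by omega
  have hfac0 : ((j.factorial : ℕ) : ℚ) ≠ 0 := Nat.cast_ne_zero.2 j.factorial_ne_zero
  set x : ℚ := poch (1/4) j / (j.factorial : ℚ) with hxdef
  set y : ℚ := (-1:ℚ)^j * (M.choose j : ℚ) with hydef
  have hden : ∏ i ∈ range j, ((i:ℚ)+1) = ((j.factorial : ℕ) : ℚ) := by
    rw [← Finset.prod_range_add_one_eq_factorial j]
    push_cast
    rfl
  have hx : x = ∏ i ∈ range j, (((1/4 : ℚ) + i) / ((i : ℚ) + 1)) := by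
    rw [Finset.prod_div_distrib, hden, hxdef, poch]
  have hy : y = ∏ i ∈ range j, (((i:ℚ) - M) / ((i:ℚ) + 1)) := by
    have hnum : ∏ i ∈ range j, ((i:ℚ) - M) = (-1:ℚ)^j * (M.descFactorial j : ℚ) := by
      calc ∏ i ∈ range j, ((i:ℚ) - M)
          = ∏ i ∈ range j, ((-1 : ℚ) * ((M - i : ℕ) : ℚ)) := by
            apply Finset.prod_congr rfl
            intro i hi
            rw [mem_range] at hi
            rw [Nat.cast_sub (by omega)]
            ring
        _ = (-1:ℚ)^j * ∏ i ∈ range j, ((M - i : ℕ) : ℚ) := by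
            rw [Finset.prod_mul_distrib, Finset.prod_const, Finset.card_range]
        _ = (-1:ℚ)^j * (M.descFactorial j : ℚ) := by
            rw [← Nat.cast_prod, ← Nat.descFactorial_eq_prod_range]
    rw [Finset.prod_div_distrib, hden, hnum, Nat.descFactorial_eq_factorial_mul_choose]
    rw [hydef]
    push_cast
    field_simp
  have hxn : padicNorm p x ≤ 1 := by
    rw [hxdef, padicNorm.div, norm_factorial hjp, div_one]
    exact norm_poch hmod j
  have hyn : padicNorm p y ≤ 1 := by
    rw [hydef]
    have h1 : padicNorm p ((-1 : ℚ) ^ j) = 1 := by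
      rw [norm_pow, padicNorm.neg, padicNorm.one, one_pow]
    have := norm_mul_le (le_of_eq h1) (padicNorm.of_nat (M.choose j))
    simpa using this
  have hxyn : padicNorm p (x - y) ≤ (p:ℚ)⁻¹ := by
    rw [hx, hy]
    refine prod_close _ _ _ (by positivity) ?_ ?_ ?_
    · intro i hi
      have h : ((1/4 : ℚ) + i) / ((i:ℚ)+1) = (((4*i+1 : ℕ)):ℚ) / (((4*(i+1) : ℕ)):ℚ) := by
        push_cast; field_simp; ring
      rw [h, padicNorm.div]
      have hd : padicNorm p (((4*(i+1) : ℕ)):ℚ) = 1 := by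
        refine norm_nat_eq_one (fun hdvd => ?_)
        rw [mem_range] at hi
        rcases (Nat.Prime.dvd_mul hp.out).1 hdvd with h4 | hi1
        · have := Nat.le_of_dvd (by norm_num) h4; omega
        · have := Nat.le_of_dvd (by omega) hi1; omega
      rw [hd, div_one]
      exact padicNorm.of_nat _
    · intro i hi
      rw [mem_range] at hi
      have h : ((i:ℚ) - M) / ((i:ℚ)+1) = (-1 : ℚ) * (((M - i : ℕ)):ℚ) / ((((i+1) : ℕ)):ℚ) := by
        rw [Nat.cast_sub (by omega)]
        push_cast
        ring
      rw [h, padicNorm.div]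
      have hd : padicNorm p ((((i+1) : ℕ)):ℚ) = 1 := by
        refine norm_nat_eq_one (fun hdvd => ?_)
        have := Nat.le_of_dvd (by omega) hdvd; omega
      rw [hd, div_one]
      have h1 : padicNorm p (-1 : ℚ) = 1 := by rw [padicNorm.neg, padicNorm.one]
      have := norm_mul_le (le_of_eq h1) (padicNorm.of_nat (M - i))
      simpa using this
    · intro i hi
      rw [mem_range] at hi
      have hq : (p : ℚ) = 4 * (M : ℚ) + 1 := by exact_mod_cast hpM
      have h : ((1/4 : ℚ) + i) / ((i:ℚ)+1) - ((i:ℚ) - M) / ((i:ℚ)+1)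
          = ((p:ℚ) / 4) / ((((i+1) : ℕ)):ℚ) := by
        have hiq : ((i:ℚ)+1) ≠ 0 := by positivity
        rw [hq]
        push_cast
        field_simp
        ring
      rw [h, padicNorm.div, padicNorm.div, padicNorm.padicNorm_p_of_prime, norm_four hmod]
      have hd : padicNorm p ((((i+1) : ℕ)):ℚ) = 1 := by
        refine norm_nat_eq_one (fun hdvd => ?_)
        have := Nat.le_of_dvd (by omega) hdvd; omega
      rw [hd]
      norm_num
  have hy4 : (-1:ℚ)^j * ((-1:ℚ)^j)^3 = 1 := by
    have hsq : ((-1:ℚ)^j)^2 = 1 := by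
      rw [← pow_mul]
      exact Even.neg_one_pow ⟨j, by ring⟩
    calc (-1:ℚ)^j * ((-1:ℚ)^j)^3 = (((-1:ℚ)^j)^2)^2 := by ring
      _ = 1 := by rw [hsq]; norm_num
  have hN : (((8*j+1) * (M.choose j)^3 : ℕ) : ℚ) = (-1:ℚ)^j * (8*(j:ℚ)+1) * y^3 := by
    rw [hydef]
    have : (-1:ℚ)^j * (8*(j:ℚ)+1) * ((-1:ℚ)^j * (M.choose j : ℚ))^3
        = (8*(j:ℚ)+1) * (M.choose j : ℚ)^3 * ((-1:ℚ)^j * ((-1:ℚ)^j)^3) := by ring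
    rw [this, hy4, mul_one]
    push_cast
    ring
  have hsplit : aa j - (((8*j+1) * (M.choose j)^3 : ℕ) : ℚ)
      = (-1:ℚ)^j * (8*(j:ℚ)+1) * (x^3 - y^3) := by
    rw [hN, aa, hxdef, div_pow]
    ring
  rw [hsplit]
  have hcube : padicNorm p (x^3 - y^3) ≤ (p:ℚ)⁻¹ := by
    have hfc : x^3 - y^3 = (x - y) * (x^2 + x*y + y^2) := by ring
    rw [hfc]
    have h2 : padicNorm p (x^2 + x*y + y^2) ≤ 1 := by
      refine le_trans padicNorm.nonarchimedean (max_le (le_trans padicNorm.nonarchimedean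
        (max_le ?_ ?_)) ?_)
      · rw [norm_pow]; exact pow_le_one₀ (padicNorm.nonneg _) hxn
      · have := norm_mul_le hxn hyn; simpa using this
      · rw [norm_pow]; exact pow_le_one₀ (padicNorm.nonneg _) hyn
    have := norm_mul_le hxyn h2
    simpa using this
  have h1 : padicNorm p ((-1 : ℚ) ^ j) = 1 := by
    rw [norm_pow, padicNorm.neg, padicNorm.one, one_pow]
  have h3 : padicNorm p (8 * (j : ℚ) + 1) ≤ 1 := by
    have h : (8 : ℚ) * j + 1 = ((8 * j + 1 : ℕ) : ℚ) := by push_cast; ring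
    rw [h]; exact padicNorm.of_nat _
  have := norm_mul_le (norm_mul_le (le_of_eq h1) h3) hcube
  simpa using this

theorem norm_A (hmod : p % 4 = 1) :
    padicNorm p (∑ j ∈ range p, ff (p/4) j) ≤ (p : ℚ)⁻¹ := by
  have hp5 : 5 ≤ p := by have := hp.out.two_le; omega
  have hpM : p = 4 * (p/4) + 1 := by omega
  set M := p / 4 with hMdef
  have h1 : ∑ j ∈ range p, ff M j = ∑ j ∈ range (M+1), aa j := by
    have hzero : ∀ x ∈ range p, x ∉ range (M+1) → ff M x = 0 := by
      intro x _ hnx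
      rw [mem_range] at hnx
      rw [ff]
      exact if_neg (by omega)
    rw [← Finset.sum_subset (Finset.range_subset_range.2 (by omega : M+1 ≤ p)) hzero]
    apply Finset.sum_congr rfl
    intro j hj
    rw [mem_range] at hj
    rw [ff]
    exact if_pos (by omega)
  set N : ℕ := ∑ j ∈ range (M+1), (8*j+1) * (M.choose j)^3 with hNdef
  have hNc : ((N:ℕ):ℚ) = ∑ j ∈ range (M+1), (((8*j+1) * (M.choose j)^3 : ℕ) : ℚ) := by
    rw [hNdef]; push_cast; rfl
  have h3 : ∑ j ∈ range (M+1), aa j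
      = (∑ j ∈ range (M+1), (aa j - (((8*j+1) * (M.choose j)^3 : ℕ) : ℚ))) + (N:ℚ) := by
    rw [hNc, Finset.sum_sub_distrib]
    ring
  have hdvd : p ∣ N := by
    have hid := sum_id M
    have h2N : N = (4*M+1) * ∑ j ∈ range (M+1), (M.choose j)^3 :=
      Nat.eq_of_mul_eq_mul_left (by norm_num) hid
    rw [h2N, show 4*M+1 = p from by omega]
    exact Dvd.intro _ rfl
  have hnormN : padicNorm p ((N:ℚ)) ≤ (p:ℚ)⁻¹ := by
    have hz : ((p ^ 1 : ℕ) : ℤ) ∣ (N : ℤ) := by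
      rw [pow_one]
      exact_mod_cast hdvd
    have := (padicNorm.dvd_iff_norm_le (p := p) (n := 1) (z := (N:ℤ))).1 hz
    simpa using this
  rw [h1, h3]
  refine le_trans padicNorm.nonarchimedean (max_le ?_ hnormN)
  refine padicNorm.sum_le' (fun j hj => ?_) (by positivity)
  rw [mem_range] at hj
  exact norm_ac hmod (by omega)

theorem ratCongr_of_norm {q : ℚ} (h : padicNorm p q ≤ (p:ℚ)^(-3 : ℤ)) : ratCongr p 3 q 0 := by
  rcases eq_or_ne q 0 with h0 | h0
  · exact Or.inl h0
  · right
    rw [sub_zero]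
    have h1 : (1:ℚ) < p := by exact_mod_cast hp.out.one_lt
    rw [padicNorm.eq_zpow_of_nonzero h0] at h
    have h2 := (zpow_le_zpow_iff_right₀ h1).1 h
    have : (3:ℤ) ≤ padicValRat p q := by linarith
    exact_mod_cast this

theorem main3 (hmod : p % 4 = 1) :
    padicNorm p (∑ k ∈ range p, ∑ j ∈ range (k+1), ∑ i ∈ range (k-j+1),
      aa j * aa i * aa (k-j-i)) ≤ (p:ℚ)^(-3 : ℤ) := by
  have hp5 : 5 ≤ p := by have := hp.out.two_le; omega
  have hpM : p = 4*(p/4)+1 := by omega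
  set M := p/4 with hMdef
  set A : ℚ := ∑ j ∈ range p, ff M j with hA
  set gg : ℕ → ℚ := fun m => ∑ i ∈ range (m+1), ff M i * ff M (m-i) with hgg
  have hffz : ∀ j, M < j → ff M j = 0 := by
    intro j hj; rw [ff]; exact if_neg (by omega)
  have hggz : ∀ m, M + M < m → gg m = 0 := by
    intro m hm
    apply Finset.sum_eq_zero
    intro i hi
    rw [mem_range] at hi
    by_cases h : i ≤ M
    · rw [hffz (m-i) (by omega), mul_zero]
    · rw [hffz i (by omega), zero_mul]
  have hG2 : ∑ m ∈ range p, gg m = A * A := conv_eq (ff M) (ff M) hffz hffz (by omega)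
  have hG : ∑ k ∈ range p, ∑ j ∈ range (k+1), ∑ i ∈ range (k-j+1),
      ff M j * ff M i * ff M (k-j-i) = A^3 := by
    have hinner : ∀ k j : ℕ, ∑ i ∈ range (k-j+1), ff M j * ff M i * ff M (k-j-i)
        = ff M j * gg (k-j) := by
      intro k j
      rw [hgg, Finset.mul_sum]
      apply Finset.sum_congr rfl
      intro i _
      ring
    calc ∑ k ∈ range p, ∑ j ∈ range (k+1), ∑ i ∈ range (k-j+1),
          ff M j * ff M i * ff M (k-j-i)
        = ∑ k ∈ range p, ∑ j ∈ range (k+1), ff M j * gg (k-j) := by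
          refine Finset.sum_congr rfl (fun k _ => ?_)
          exact Finset.sum_congr rfl (fun j _ => hinner k j)
      _ = A * ∑ m ∈ range p, gg m := conv_eq (ff M) gg hffz hggz (by omega)
      _ = A^3 := by rw [hG2]; ring
  have hterm : ∀ k < p, ∀ j ≤ k, ∀ i ≤ k - j,
      padicNorm p (aa j * aa i * aa (k-j-i) - ff M j * ff M i * ff M (k-j-i))
        ≤ (p:ℚ)^(-3 : ℤ) := by
    intro k hk j hj i hi
    have hjp : j < p := by omega
    have hip : i < p := by omega
    have hlp : k - j - i < p := by omega
    have hsplit : aa j * aa i * aa (k-j-i) - ff M j * ff M i * ff M (k-j-i)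
        = (aa j - ff M j) * aa i * aa (k-j-i)
          + (aa i - ff M i) * (ff M j * aa (k-j-i))
          + (aa (k-j-i) - ff M (k-j-i)) * (ff M j * ff M i) := by ring
    rw [hsplit]
    have hb1 : padicNorm p ((aa j - ff M j) * aa i * aa (k-j-i)) ≤ (p:ℚ)^(-3 : ℤ) := by
      have := norm_mul_le (norm_mul_le (norm_diff hmod hjp) (norm_aa hmod hip))
        (norm_aa hmod hlp)
      simpa using this
    have hb2 : padicNorm p ((aa i - ff M i) * (ff M j * aa (k-j-i))) ≤ (p:ℚ)^(-3 : ℤ) := by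
      have := norm_mul_le (norm_diff hmod hip)
        (norm_mul_le (norm_ff hmod j) (norm_aa hmod hlp))
      simpa using this
    have hb3 : padicNorm p ((aa (k-j-i) - ff M (k-j-i)) * (ff M j * ff M i))
        ≤ (p:ℚ)^(-3 : ℤ) := by
      have := norm_mul_le (norm_diff hmod hlp)
        (norm_mul_le (norm_ff hmod j) (norm_ff hmod i))
      simpa using this
    exact le_trans padicNorm.nonarchimedean
      (max_le (le_trans padicNorm.nonarchimedean (max_le hb1 hb2)) hb3)
  have hsub : padicNorm p ((∑ k ∈ range p, ∑ j ∈ range (k+1), ∑ i ∈ range (k-j+1),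
      aa j * aa i * aa (k-j-i)) - ∑ k ∈ range p, ∑ j ∈ range (k+1), ∑ i ∈ range (k-j+1),
      ff M j * ff M i * ff M (k-j-i)) ≤ (p:ℚ)^(-3 : ℤ) := by
    rw [← Finset.sum_sub_distrib]
    refine padicNorm.sum_le' (fun k hk => ?_) (by positivity)
    rw [← Finset.sum_sub_distrib]
    refine padicNorm.sum_le' (fun j hj => ?_) (by positivity)
    rw [← Finset.sum_sub_distrib]
    refine padicNorm.sum_le' (fun i hi => ?_) (by positivity)
    rw [mem_range] at hk hj hi
    exact hterm k hk j (by omega) i (by omega)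
  have hA3 : padicNorm p (A^3) ≤ (p:ℚ)^(-3 : ℤ) := by
    rw [norm_pow, pow3_eq]
    exact pow_le_pow_left₀ (padicNorm.nonneg _) (norm_A hmod) 3
  rw [hG] at hsub
  calc padicNorm p (∑ k ∈ range p, ∑ j ∈ range (k+1), ∑ i ∈ range (k-j+1),
        aa j * aa i * aa (k-j-i))
      = padicNorm p (((∑ k ∈ range p, ∑ j ∈ range (k+1), ∑ i ∈ range (k-j+1),
          aa j * aa i * aa (k-j-i)) - A^3) + A^3) := by rw [sub_add_cancel]
    _ ≤ max (padicNorm p ((∑ k ∈ range p, ∑ j ∈ range (k+1), ∑ i ∈ range (k-j+1),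
          aa j * aa i * aa (k-j-i)) - A^3)) (padicNorm p (A^3)) := padicNorm.nonarchimedean
    _ ≤ (p:ℚ)^(-3 : ℤ) := max_le hsub hA3

theorem main4 (hmod : p % 4 = 1) :
    padicNorm p (∑ k ∈ range p, ∑ j ∈ range (k+1), ∑ i ∈ range (k-j+1),
      ∑ h ∈ range (k-j-i+1), aa j * aa i * aa h * aa (k-j-i-h)) ≤ (p:ℚ)^(-3 : ℤ) := by
  have hp5 : 5 ≤ p := by have := hp.out.two_le; omega
  have hpM : p = 4*(p/4)+1 := by omega
  set M := p/4 with hMdef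
  set A : ℚ := ∑ j ∈ range p, ff M j with hA
  set gg : ℕ → ℚ := fun m => ∑ i ∈ range (m+1), ff M i * ff M (m-i) with hgg
  set gg3 : ℕ → ℚ := fun m => ∑ i ∈ range (m+1), ff M i * gg (m-i) with hgg3
  have hffz : ∀ j, M < j → ff M j = 0 := by
    intro j hj; rw [ff]; exact if_neg (by omega)
  have hggz : ∀ m, M + M < m → gg m = 0 := by
    intro m hm
    apply Finset.sum_eq_zero
    intro i hi
    rw [mem_range] at hi
    by_cases h : i ≤ M
    · rw [hffz (m-i) (by omega), mul_zero]
    · rw [hffz i (by omega), zero_mul]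
  have hgg3z : ∀ m, M + (M + M) < m → gg3 m = 0 := by
    intro m hm
    apply Finset.sum_eq_zero
    intro i hi
    rw [mem_range] at hi
    by_cases h : i ≤ M
    · rw [hggz (m-i) (by omega), mul_zero]
    · rw [hffz i (by omega), zero_mul]
  have hG2 : ∑ m ∈ range p, gg m = A * A := conv_eq (ff M) (ff M) hffz hffz (by omega)
  have hG3 : ∑ m ∈ range p, gg3 m = A * (A * A) := by
    rw [← hG2]
    exact conv_eq (ff M) gg hffz hggz (by omega)
  have hG : ∑ k ∈ range p, ∑ j ∈ range (k+1), ∑ i ∈ range (k-j+1),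
      ∑ h ∈ range (k-j-i+1), ff M j * ff M i * ff M h * ff M (k-j-i-h) = A^4 := by
    have hinner2 : ∀ m i : ℕ, ∑ h ∈ range (m-i+1), ff M i * ff M h * ff M (m-i-h)
        = ff M i * gg (m-i) := by
      intro m i
      rw [hgg, Finset.mul_sum]
      apply Finset.sum_congr rfl
      intro h _
      ring
    have hinner : ∀ k j : ℕ, ∑ i ∈ range (k-j+1), ∑ h ∈ range (k-j-i+1),
        ff M j * ff M i * ff M h * ff M (k-j-i-h) = ff M j * gg3 (k-j) := by
      intro k j
      rw [hgg3, Finset.mul_sum]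
      apply Finset.sum_congr rfl
      intro i _
      calc ∑ h ∈ range (k-j-i+1), ff M j * ff M i * ff M h * ff M (k-j-i-h)
          = ff M j * ∑ h ∈ range ((k-j)-i+1), ff M i * ff M h * ff M ((k-j)-i-h) := by
            rw [Finset.mul_sum]
            exact Finset.sum_congr rfl (fun h _ => by ring)
        _ = ff M j * (ff M i * gg ((k-j)-i)) := by rw [hinner2 (k-j) i]
    calc ∑ k ∈ range p, ∑ j ∈ range (k+1), ∑ i ∈ range (k-j+1),
          ∑ h ∈ range (k-j-i+1), ff M j * ff M i * ff M h * ff M (k-j-i-h)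
        = ∑ k ∈ range p, ∑ j ∈ range (k+1), ff M j * gg3 (k-j) := by
          refine Finset.sum_congr rfl (fun k _ => ?_)
          exact Finset.sum_congr rfl (fun j _ => hinner k j)
      _ = A * ∑ m ∈ range p, gg3 m := conv_eq (ff M) gg3 hffz hgg3z (by omega)
      _ = A^4 := by rw [hG3]; ring
  have hterm : ∀ k < p, ∀ j ≤ k, ∀ i ≤ k - j, ∀ h ≤ k - j - i,
      padicNorm p (aa j * aa i * aa h * aa (k-j-i-h)
        - ff M j * ff M i * ff M h * ff M (k-j-i-h)) ≤ (p:ℚ)^(-3 : ℤ) := by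
    intro k hk j hj i hi h hh
    have hjp : j < p := by omega
    have hip : i < p := by omega
    have hhp : h < p := by omega
    have hlp : k - j - i - h < p := by omega
    have hsplit : aa j * aa i * aa h * aa (k-j-i-h)
        - ff M j * ff M i * ff M h * ff M (k-j-i-h)
        = (aa j - ff M j) * (aa i * aa h * aa (k-j-i-h))
          + (aa i - ff M i) * (ff M j * (aa h * aa (k-j-i-h)))
          + (aa h - ff M h) * (ff M j * ff M i * aa (k-j-i-h))
          + (aa (k-j-i-h) - ff M (k-j-i-h)) * (ff M j * ff M i * ff M h) := by ring
    rw [hsplit]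
    have hb1 : padicNorm p ((aa j - ff M j) * (aa i * aa h * aa (k-j-i-h)))
        ≤ (p:ℚ)^(-3 : ℤ) := by
      have := norm_mul_le (norm_diff hmod hjp)
        (norm_mul_le (norm_mul_le (norm_aa hmod hip) (norm_aa hmod hhp)) (norm_aa hmod hlp))
      simpa using this
    have hb2 : padicNorm p ((aa i - ff M i) * (ff M j * (aa h * aa (k-j-i-h))))
        ≤ (p:ℚ)^(-3 : ℤ) := by
      have := norm_mul_le (norm_diff hmod hip)
        (norm_mul_le (norm_ff hmod j) (norm_mul_le (norm_aa hmod hhp) (norm_aa hmod hlp)))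
      simpa using this
    have hb3 : padicNorm p ((aa h - ff M h) * (ff M j * ff M i * aa (k-j-i-h)))
        ≤ (p:ℚ)^(-3 : ℤ) := by
      have := norm_mul_le (norm_diff hmod hhp)
        (norm_mul_le (norm_mul_le (norm_ff hmod j) (norm_ff hmod i)) (norm_aa hmod hlp))
      simpa using this
    have hb4 : padicNorm p ((aa (k-j-i-h) - ff M (k-j-i-h)) * (ff M j * ff M i * ff M h))
        ≤ (p:ℚ)^(-3 : ℤ) := by
      have := norm_mul_le (norm_diff hmod hlp)
        (norm_mul_le (norm_mul_le (norm_ff hmod j) (norm_ff hmod i)) (norm_ff hmod h))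
      simpa using this
    refine le_trans padicNorm.nonarchimedean (max_le ?_ hb4)
    refine le_trans padicNorm.nonarchimedean (max_le ?_ hb3)
    exact le_trans padicNorm.nonarchimedean (max_le hb1 hb2)
  have hsub : padicNorm p ((∑ k ∈ range p, ∑ j ∈ range (k+1), ∑ i ∈ range (k-j+1),
      ∑ h ∈ range (k-j-i+1), aa j * aa i * aa h * aa (k-j-i-h))
      - ∑ k ∈ range p, ∑ j ∈ range (k+1), ∑ i ∈ range (k-j+1),
      ∑ h ∈ range (k-j-i+1), ff M j * ff M i * ff M h * ff M (k-j-i-h))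
        ≤ (p:ℚ)^(-3 : ℤ) := by
    rw [← Finset.sum_sub_distrib]
    refine padicNorm.sum_le' (fun k hk => ?_) (by positivity)
    rw [← Finset.sum_sub_distrib]
    refine padicNorm.sum_le' (fun j hj => ?_) (by positivity)
    rw [← Finset.sum_sub_distrib]
    refine padicNorm.sum_le' (fun i hi => ?_) (by positivity)
    rw [← Finset.sum_sub_distrib]
    refine padicNorm.sum_le' (fun h hh => ?_) (by positivity)
    rw [mem_range] at hk hj hi hh
    exact hterm k hk j (by omega) i (by omega) h (by omega)
  have hA4 : padicNorm p (A^4) ≤ (p:ℚ)^(-3 : ℤ) := by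
    rw [norm_pow]
    have h4 : (padicNorm p A)^4 ≤ ((p:ℚ)⁻¹)^4 :=
      pow_le_pow_left₀ (padicNorm.nonneg _) (norm_A hmod) 4
    have h5 : ((p:ℚ)⁻¹)^4 = (p:ℚ)^(-4 : ℤ) := by
      rw [inv_pow, zpow_neg, show (4:ℤ) = ((4:ℕ):ℤ) by norm_num, zpow_natCast]
    have h6 : (p:ℚ)^(-4 : ℤ) ≤ (p:ℚ)^(-3 : ℤ) :=
      zpow_le_zpow_right₀ (by exact_mod_cast hp.out.one_le) (by norm_num)
    calc (padicNorm p A)^4 ≤ ((p:ℚ)⁻¹)^4 := h4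
      _ = (p:ℚ)^(-4 : ℤ) := h5
      _ ≤ (p:ℚ)^(-3 : ℤ) := h6
  rw [hG] at hsub
  calc padicNorm p (∑ k ∈ range p, ∑ j ∈ range (k+1), ∑ i ∈ range (k-j+1),
        ∑ h ∈ range (k-j-i+1), aa j * aa i * aa h * aa (k-j-i-h))
      = padicNorm p (((∑ k ∈ range p, ∑ j ∈ range (k+1), ∑ i ∈ range (k-j+1),
          ∑ h ∈ range (k-j-i+1), aa j * aa i * aa h * aa (k-j-i-h)) - A^4) + A^4) := by
        rw [sub_add_cancel]
    _ ≤ max (padicNorm p ((∑ k ∈ range p, ∑ j ∈ range (k+1), ∑ i ∈ range (k-j+1),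
          ∑ h ∈ range (k-j-i+1), aa j * aa i * aa h * aa (k-j-i-h)) - A^4))
          (padicNorm p (A^4)) := padicNorm.nonarchimedean
    _ ≤ (p:ℚ)^(-3 : ℤ) := max_le hsub hA4

end Stmt7Aux

theorem stmt_7 (p : ℕ) (hp : p.Prime) (hmod : p % 4 = 1) :
    ratCongr p 3
      (∑ k ∈ Finset.range p, ∑ j ∈ Finset.range (k + 1), ∑ i ∈ Finset.range (k - j + 1),
        (-1 : ℚ) ^ k * ((poch (1/4) (j)) ^ 3 / ((j).factorial : ℚ) ^ 3) *
          ((poch (1/4) (i)) ^ 3 / ((i).factorial : ℚ) ^ 3) *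
          ((poch (1/4) (k - j - i)) ^ 3 / ((k - j - i).factorial : ℚ) ^ 3) *
          (8 * ((i : ℕ) : ℚ) + 1) * (8 * ((j : ℕ) : ℚ) + 1) * (8 * ((k - j - i : ℕ) : ℚ) + 1))
      0 ∧
    ratCongr p 3
      (∑ k ∈ Finset.range p, ∑ j ∈ Finset.range (k + 1), ∑ i ∈ Finset.range (k - j + 1),
        ∑ h ∈ Finset.range (k - j - i + 1),
        (-1 : ℚ) ^ k * ((poch (1/4) (j)) ^ 3 / ((j).factorial : ℚ) ^ 3) *
          ((poch (1/4) (i)) ^ 3 / ((i).factorial : ℚ) ^ 3) *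
          ((poch (1/4) (h)) ^ 3 / ((h).factorial : ℚ) ^ 3) *
          ((poch (1/4) (k - j - i - h)) ^ 3 / ((k - j - i - h).factorial : ℚ) ^ 3) *
          (8 * ((i : ℕ) : ℚ) + 1) * (8 * ((j : ℕ) : ℚ) + 1) * (8 * ((h : ℕ) : ℚ) + 1) * (8 * ((k - j - i - h : ℕ) : ℚ) + 1))
      0 := by
  haveI : Fact p.Prime := ⟨hp⟩
  open Stmt7Aux in
  constructor
  · have hrw : (∑ k ∈ Finset.range p, ∑ j ∈ Finset.range (k + 1),
        ∑ i ∈ Finset.range (k - j + 1),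
        (-1 : ℚ) ^ k * ((poch (1/4) (j)) ^ 3 / ((j).factorial : ℚ) ^ 3) *
          ((poch (1/4) (i)) ^ 3 / ((i).factorial : ℚ) ^ 3) *
          ((poch (1/4) (k - j - i)) ^ 3 / ((k - j - i).factorial : ℚ) ^ 3) *
          (8 * ((i : ℕ) : ℚ) + 1) * (8 * ((j : ℕ) : ℚ) + 1) * (8 * ((k - j - i : ℕ) : ℚ) + 1))
        = ∑ k ∈ Finset.range p, ∑ j ∈ Finset.range (k+1), ∑ i ∈ Finset.range (k-j+1),
          Stmt7Aux.aa j * Stmt7Aux.aa i * Stmt7Aux.aa (k-j-i) := by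
      refine Finset.sum_congr rfl (fun k hk => ?_)
      refine Finset.sum_congr rfl (fun j hj => ?_)
      refine Finset.sum_congr rfl (fun i hi => ?_)
      rw [Finset.mem_range] at hk hj hi
      have hsign : (-1:ℚ)^k = (-1:ℚ)^j * ((-1:ℚ)^i * (-1:ℚ)^(k-j-i)) := by
        rw [← pow_add, ← pow_add]
        congr 1
        omega
      simp only [Stmt7Aux.aa]
      rw [hsign]
      ring
    rw [hrw]
    exact Stmt7Aux.ratCongr_of_norm (Stmt7Aux.main3 hmod)
  · have hrw : (∑ k ∈ Finset.range p, ∑ j ∈ Finset.range (k + 1),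
        ∑ i ∈ Finset.range (k - j + 1), ∑ h ∈ Finset.range (k - j - i + 1),
        (-1 : ℚ) ^ k * ((poch (1/4) (j)) ^ 3 / ((j).factorial : ℚ) ^ 3) *
          ((poch (1/4) (i)) ^ 3 / ((i).factorial : ℚ) ^ 3) *
          ((poch (1/4) (h)) ^ 3 / ((h).factorial : ℚ) ^ 3) *
          ((poch (1/4) (k - j - i - h)) ^ 3 / ((k - j - i - h).factorial : ℚ) ^ 3) *
          (8 * ((i : ℕ) : ℚ) + 1) * (8 * ((j : ℕ) : ℚ) + 1) * (8 * ((h : ℕ) : ℚ) + 1) *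
          (8 * ((k - j - i - h : ℕ) : ℚ) + 1))
        = ∑ k ∈ Finset.range p, ∑ j ∈ Finset.range (k+1), ∑ i ∈ Finset.range (k-j+1),
          ∑ h ∈ Finset.range (k-j-i+1),
          Stmt7Aux.aa j * Stmt7Aux.aa i * Stmt7Aux.aa h * Stmt7Aux.aa (k-j-i-h) := by
      refine Finset.sum_congr rfl (fun k hk => ?_)
      refine Finset.sum_congr rfl (fun j hj => ?_)
      refine Finset.sum_congr rfl (fun i hi => ?_)
      refine Finset.sum_congr rfl (fun h hh => ?_)
      rw [Finset.mem_range] at hk hj hi hh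
      have hsign : (-1:ℚ)^k = (-1:ℚ)^j * ((-1:ℚ)^i * ((-1:ℚ)^h * (-1:ℚ)^(k-j-i-h))) := by
        rw [← pow_add, ← pow_add, ← pow_add]
        congr 1
        omega
      simp only [Stmt7Aux.aa]
      rw [hsign]
      ring
    rw [hrw]
    exact Stmt7Aux.ratCongr_of_norm (Stmt7Aux.main4 hmod)
end

section
/- If p is a prime with p ≡ 1 (mod 4), then both of the following rational numbers are ≡ 0 (mod p^3): (i) ∑_{k=0}^{p−1} ∑_{j=0}^{k} ∑_{i=0}^{k−j} ((1/4)_j^4/(j!)^4)·((1/4)_i^4/(i!)^4)·((1/4)_{k−j−i}^4/((k−j−i)!)^4)·(8i+1)(8j+1)(8(k−j−i)+1); and (ii) ∑_{k=0}^{p−1} ∑_{j=0}^{k} ∑_{i=0}^{k−j} ∑_{h=0}^{k−j−i} ((1/4)_j^4/(j!)^4)·((1/4)_i^4/(i!)^4)·((1/4)_h^4/(h!)^4)·((1/4)_{k−j−i−h}^4/((k−j−i−h)!)^4)·(8i+1)(8j+1)(8h+1)(8(k−j−i−h)+1). -/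
open Finset

set_option linter.unusedSectionVars false

section Aux
variable {p : ℕ} [hpfact : Fact p.Prime]

lemma my_norm_sum_le {ι : Type*} (s : Finset ι) (f : ι → ℚ_[p]) {C : ℝ} (hC : 0 ≤ C)
    (h : ∀ i ∈ s, ‖f i‖ ≤ C) : ‖∑ i ∈ s, f i‖ ≤ C := by
  classical
  induction s using Finset.induction_on with
  | empty => simpa using hC
  | @insert a s ha ih =>
    rw [Finset.sum_insert ha]
    exact le_trans (Padic.nonarchimedean _ _)
      (max_le (h a (mem_insert_self _ _)) (ih fun i hi => h i (mem_insert_of_mem hi)))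

lemma sum_triangle {M : Type*} [AddCommMonoid M] (f : ℕ → ℕ → M) :
    ∀ n, ∑ k ∈ range n, ∑ j ∈ range (k+1), f j (k - j)
      = ∑ j ∈ range n, ∑ d ∈ range (n - j), f j d
  | 0 => by simp
  | n+1 => by
    rw [Finset.sum_range_succ, sum_triangle f n,
      Finset.sum_range_succ (fun j => ∑ d ∈ range (n + 1 - j), f j d)]
    have h1 : ∀ j ∈ range n, ∑ d ∈ range (n+1-j), f j d
        = ∑ d ∈ range (n-j), f j d + f j (n-j) := by
      intro j hj
      rw [mem_range] at hj
      rw [show n+1-j = (n-j)+1 by omega, Finset.sum_range_succ]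
    rw [Finset.sum_congr rfl h1, Finset.sum_add_distrib,
      Finset.sum_range_succ (fun j => f j (n - j))]
    simp only [Nat.sub_self, Nat.add_sub_cancel_left, Nat.sub_zero]
    simp only [Finset.sum_range_one]
    abel

noncomputable def Npow (A : ℕ → ℚ_[p]) : ℕ → ℕ → ℚ_[p]
  | 0, _ => 1
  | r+1, t => ∑ j ∈ range t, A j * Npow A r (t - j)

lemma Npow_norm_le {A : ℕ → ℚ_[p]} (hA : ∀ n < p, ‖A n‖ ≤ 1) :
    ∀ r t, t ≤ p → ‖Npow A r t‖ ≤ 1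
  | 0, t, _ => by simp [Npow]
  | r+1, t, ht => by
    rw [Npow]
    refine my_norm_sum_le _ _ zero_le_one fun j hj => ?_
    rw [mem_range] at hj
    calc ‖A j * Npow A r (t-j)‖ = ‖A j‖ * ‖Npow A r (t-j)‖ := norm_mul _ _
    _ ≤ 1*1 := mul_le_mul (hA j (lt_of_lt_of_le hj ht))
        (Npow_norm_le hA r (t-j) (le_trans (Nat.sub_le _ _) ht)) (norm_nonneg _) zero_le_one
    _ = 1 := mul_one 1

lemma Npow_estimate {A : ℕ → ℚ_[p]} {m : ℕ} (hpm : p = 4*m+1)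
    (hA : ∀ n < p, ‖A n‖ ≤ 1)
    (hA3 : ∀ n, m < n → n < p → ‖A n‖ ≤ ((p:ℝ)⁻¹)^3) :
    ∀ r t, t ≤ p → r*m + 1 ≤ t →
      ‖Npow A r t - (∑ n ∈ range (m+1), A n)^r‖ ≤ ((p:ℝ)⁻¹)^3
  | 0, t, _, _ => by simp [Npow, pow_nonneg]
  | r+1, t, ht, hrt => by
    have hε : (0:ℝ) ≤ ((p:ℝ)⁻¹)^3 := by positivity
    have hrm : r*m + m + 1 ≤ t := by rw [Nat.succ_mul] at hrt; omega
    have hm1t : m + 1 ≤ t := by omega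
    set S0 := ∑ n ∈ range (m+1), A n with hS0def
    have hpow : S0^(r+1) = ∑ j ∈ range (m+1), A j * S0^r := by
      rw [← Finset.sum_mul, pow_succ, mul_comm]
    have e1 : Npow A (r+1) t - S0^(r+1)
        = (∑ j ∈ range (m+1), A j * (Npow A r (t-j) - S0^r))
          + ∑ j ∈ Ico (m+1) t, A j * Npow A r (t-j) := by
      rw [show Npow A (r+1) t = ∑ j ∈ range t, A j * Npow A r (t - j) from rfl,
        ← Finset.sum_range_add_sum_Ico _ hm1t, hpow, add_sub_right_comm,
        ← Finset.sum_sub_distrib]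
      congr 1
      exact Finset.sum_congr rfl fun j _ => (mul_sub _ _ _).symm
    rw [e1]
    refine le_trans (Padic.nonarchimedean _ _) (max_le ?_ ?_)
    · refine my_norm_sum_le _ _ hε fun j hj => ?_
      rw [mem_range] at hj
      have h1 : ‖A j‖ ≤ 1 := hA j (by omega)
      have h2 := Npow_estimate hpm hA hA3 r (t-j) (le_trans (Nat.sub_le _ _) ht)
        (by omega)
      calc ‖A j * (Npow A r (t-j) - S0^r)‖ = ‖A j‖ * ‖Npow A r (t-j) - S0^r‖ := norm_mul _ _
      _ ≤ 1 * (((p:ℝ)⁻¹)^3) := mul_le_mul h1 h2 (norm_nonneg _) zero_le_one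
      _ = ((p:ℝ)⁻¹)^3 := one_mul _
    · refine my_norm_sum_le _ _ hε fun j hj => ?_
      rw [mem_Ico] at hj
      have h1 : ‖A j‖ ≤ ((p:ℝ)⁻¹)^3 := hA3 j (by omega) (by omega)
      have h2 : ‖Npow A r (t-j)‖ ≤ 1 := Npow_norm_le hA r (t-j) (le_trans (Nat.sub_le _ _) ht)
      calc ‖A j * Npow A r (t-j)‖ = ‖A j‖ * ‖Npow A r (t-j)‖ := norm_mul _ _
      _ ≤ (((p:ℝ)⁻¹)^3) * 1 := mul_le_mul h1 h2 (norm_nonneg _) hε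
      _ = ((p:ℝ)⁻¹)^3 := mul_one _

end Aux

namespace Stmt15

/-- numerator product -/
def P (n : ℕ) : ℤ := ∏ j ∈ range n, (4*(j:ℤ)+1)

def Q (p n : ℕ) : ℤ := ∏ j ∈ range n, (4*(j:ℤ)+1-(p:ℤ))

/-- the summand -/
def aq (n : ℕ) : ℚ := (poch (1/4) n)^4 / ((n.factorial : ℚ))^4 * (8*(n:ℚ)+1)

lemma poch_eq (n : ℕ) : poch (1/4) n = (P n : ℚ) / 4^n := by
  rw [poch, P]
  push_cast
  calc ∏ j ∈ range n, (1/4 + (j:ℚ)) = ∏ j ∈ range n, ((4*(j:ℚ)+1)/4) :=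
        Finset.prod_congr rfl fun j _ => by ring
  _ = (∏ j ∈ range n, (4*(j:ℚ)+1)) / ∏ _j ∈ range n, (4:ℚ) := Finset.prod_div_distrib _ _
  _ = (∏ j ∈ range n, (4*(j:ℚ)+1)) / 4^n := by rw [Finset.prod_const, Finset.card_range]

lemma aq_eq (n : ℕ) :
    aq n = (((8*(n:ℤ)+1) * P n ^ 4 : ℤ) : ℚ) / (((4^n * n.factorial : ℤ) : ℚ))^4 := by
  have h4 : ((4:ℚ))^n ≠ 0 := by positivity
  have hf : ((n.factorial : ℚ)) ≠ 0 := by exact_mod_cast n.factorial_ne_zero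
  rw [aq, poch_eq]
  push_cast
  field_simp


section
variable {p : ℕ} [hpf : Fact p.Prime]

lemma den_norm_one (hp5 : 5 ≤ p) {n : ℕ} (hn : n < p) :
    ‖(((4^n * n.factorial : ℤ) : ℚ_[p]))‖ = 1 := by
  refine le_antisymm (Padic.norm_int_le_one _) ?_
  by_contra hlt
  push_neg at hlt
  rw [Padic.norm_intCast_lt_one_iff] at hlt
  have : (p:ℤ) ∣ ((4^n * n.factorial : ℕ) : ℤ) := by push_cast; exact_mod_cast hlt
  rw [Int.natCast_dvd_natCast] at this
  rcases (Nat.Prime.dvd_mul hpf.out).1 this with h | h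
  · have := Nat.le_of_dvd (by norm_num) (Nat.Prime.dvd_of_dvd_pow hpf.out h)
    omega
  · have := (Nat.Prime.dvd_factorial hpf.out).1 h
    omega

lemma A_norm_le_one (hp5 : 5 ≤ p) {n : ℕ} (hn : n < p) :
    ‖((aq n : ℚ) : ℚ_[p])‖ ≤ 1 := by
  rw [aq_eq]
  push_cast
  rw [norm_div]
  rw [show ((4:ℚ_[p])^n * (n.factorial:ℚ_[p]))^4 = (((4^n * n.factorial : ℤ) : ℚ_[p]))^4 by
    push_cast; ring]
  rw [norm_pow, den_norm_one hp5 hn, one_pow, div_one]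
  calc ‖(8*(n:ℚ_[p])+1) * ((P n : ℚ_[p]))^4‖
      = ‖(((8*(n:ℤ)+1) * P n^4 : ℤ) : ℚ_[p])‖ := by push_cast; ring_nf
  _ ≤ 1 := Padic.norm_int_le_one _

lemma P_dvd {m n : ℕ} (hpm : p = 4*m+1) (hmn : m < n) : (p:ℤ) ∣ P n := by
  have h := Finset.dvd_prod_of_mem (fun j : ℕ => (4*(j:ℤ)+1)) (Finset.mem_range.2 hmn)
  rwa [show (4*(m:ℤ)+1) = (p:ℤ) by push_cast [hpm]; ring] at h

lemma A_norm_le_small (hp5 : 5 ≤ p) {m n : ℕ} (hpm : p = 4*m+1) (hmn : m < n) (hn : n < p) :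
    ‖((aq n : ℚ) : ℚ_[p])‖ ≤ ((p:ℝ)⁻¹)^3 := by
  obtain ⟨c, hc⟩ := P_dvd hpm hmn
  have hP : ‖((P n : ℤ) : ℚ_[p])‖ ≤ (p:ℝ)⁻¹ := by
    rw [hc]
    push_cast
    rw [norm_mul, Padic.norm_p]
    calc (p:ℝ)⁻¹ * ‖((c:ℚ_[p]))‖ ≤ (p:ℝ)⁻¹ * 1 := by
          refine mul_le_mul_of_nonneg_left (Padic.norm_int_le_one _) (by positivity)
    _ = (p:ℝ)⁻¹ := mul_one _
  have hpinv1 : (p:ℝ)⁻¹ ≤ 1 := by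
    rw [inv_le_one_iff₀]; right; exact_mod_cast by omega
  rw [aq_eq]
  push_cast
  rw [norm_div]
  rw [show ((4:ℚ_[p])^n * (n.factorial:ℚ_[p]))^4 = (((4^n * n.factorial : ℤ) : ℚ_[p]))^4 by
    push_cast; ring]
  rw [norm_pow, den_norm_one hp5 hn, one_pow, div_one]
  calc ‖(8*(n:ℚ_[p])+1) * ((P n : ℚ_[p]))^4‖
      = ‖(((8*(n:ℤ)+1) : ℤ) : ℚ_[p])‖ * ‖((P n : ℤ) : ℚ_[p])‖^4 := by
        push_cast; rw [norm_mul, norm_pow]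
  _ ≤ 1 * ((p:ℝ)⁻¹)^4 := by
        refine mul_le_mul (Padic.norm_int_le_one _) ?_ (by positivity) zero_le_one
        exact pow_le_pow_left₀ (norm_nonneg _) hP 4
  _ = ((p:ℝ)⁻¹)^4 := one_mul _
  _ ≤ ((p:ℝ)⁻¹)^3 := pow_le_pow_of_le_one (by positivity) hpinv1 (by norm_num)


lemma PQ_cong (n : ℕ) : (p:ℤ) ∣ P n - Q p n := by
  have h : ((P n - Q p n : ℤ) : ZMod p) = 0 := by
    rw [Int.cast_sub, P, Q, Int.cast_prod, Int.cast_prod]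
    rw [Finset.prod_congr rfl fun j _ => ?_, sub_self]
    push_cast [ZMod.natCast_self]
    ring
  exact (ZMod.intCast_zmod_eq_zero_iff_dvd _ p).1 h

omit hpf in
lemma Q_eq {m n : ℕ} (hpm : p = 4*m+1) (hn : n ≤ m) :
    Q p n = (-4)^n * ((n.factorial * m.choose n : ℕ) : ℤ) := by
  have h1 : Q p n = ∏ j ∈ range n, ((-4) * ((m:ℤ) - (j:ℤ))) := by
    refine Finset.prod_congr rfl fun j _ => ?_
    push_cast [hpm]
    ring
  rw [h1, Finset.prod_mul_distrib, Finset.prod_const, Finset.card_range]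
  congr 1
  have h2 : ∏ j ∈ range n, ((m:ℤ) - (j:ℤ)) = ((m.descFactorial n : ℕ) : ℤ) := by
    rw [Nat.descFactorial_eq_prod_range, Nat.cast_prod]
    refine Finset.prod_congr rfl fun j hj => ?_
    rw [Finset.mem_range] at hj
    rw [Nat.cast_sub (by omega)]
  rw [h2, ← Nat.descFactorial_eq_factorial_mul_choose]

omit hpf in
lemma reflect_id {m : ℕ} (hpm : p = 4*m+1) :
    ∑ n ∈ range (m+1), (8*(n:ℤ)+1) * ((m.choose n : ℕ) : ℤ)^4
      = (p:ℤ) * ∑ n ∈ range (m+1), ((m.choose n : ℕ) : ℤ)^4 := by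
  set F : ℕ → ℤ := fun n => (8*(n:ℤ)+1) * ((m.choose n : ℕ) : ℤ)^4 with hF
  have hrefl : ∑ j ∈ range (m+1), F (m - j) = ∑ j ∈ range (m+1), F j := by
    have := Finset.sum_range_reflect F (m+1)
    simpa using this
  have hterm : ∀ j ∈ range (m+1), F j + F (m - j) = 2*(p:ℤ)*((m.choose j : ℕ) : ℤ)^4 := by
    intro j hj
    rw [Finset.mem_range] at hj
    have hjm : j ≤ m := by omega
    rw [hF]
    simp only
    rw [Nat.choose_symm hjm, Nat.cast_sub hjm]
    push_cast [hpm]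
    ring
  have h2 : 2 * ∑ n ∈ range (m+1), F n
      = 2 * ((p:ℤ) * ∑ n ∈ range (m+1), ((m.choose n : ℕ) : ℤ)^4) := by
    calc 2 * ∑ n ∈ range (m+1), F n
        = ∑ n ∈ range (m+1), F n + ∑ n ∈ range (m+1), F (m - n) := by rw [hrefl]; ring
    _ = ∑ n ∈ range (m+1), (F n + F (m - n)) := by rw [Finset.sum_add_distrib]
    _ = ∑ n ∈ range (m+1), 2*(p:ℤ)*((m.choose n : ℕ) : ℤ)^4 := Finset.sum_congr rfl hterm
    _ = 2 * ((p:ℤ) * ∑ n ∈ range (m+1), ((m.choose n : ℕ) : ℤ)^4) := by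
        rw [Finset.mul_sum, Finset.mul_sum]
        exact Finset.sum_congr rfl fun n _ => by ring
  exact mul_left_cancel₀ (by norm_num) h2

lemma A_sub_b (hp5 : 5 ≤ p) {m n : ℕ} (hpm : p = 4*m+1) (hn : n ≤ m) :
    ‖((aq n : ℚ) : ℚ_[p]) - (((8*(n:ℤ)+1) * ((m.choose n : ℕ) : ℤ)^4 : ℤ) : ℚ_[p])‖
      ≤ (p:ℝ)⁻¹ := by
  have hnp : n < p := by omega
  have hden : ‖(((4^n * n.factorial : ℤ) : ℚ_[p]))‖ = 1 := den_norm_one hp5 hnp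
  have hdenne : (((4^n * n.factorial : ℤ) : ℚ_[p])) ≠ 0 := by
    intro h0; rw [h0] at hden; simp at hden
  -- b as fraction with same denominator
  have hb : (((8*(n:ℤ)+1) * ((m.choose n : ℕ) : ℤ)^4 : ℤ) : ℚ_[p])
      = (((8*(n:ℤ)+1) * Q p n^4 : ℤ) : ℚ_[p]) / (((4^n * n.factorial : ℤ) : ℚ_[p]))^4 := by
    rw [eq_div_iff (pow_ne_zero _ hdenne)]
    have hneg : ((-4:ℤ)^n)^4 = ((4:ℤ)^n)^4 := by
      rw [← pow_mul, ← pow_mul, mul_comm n 4, pow_mul, pow_mul]; norm_num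
    have hQ4 : (Q p n)^4 = ((4:ℤ)^n)^4 * (((n.factorial * m.choose n : ℕ) : ℤ))^4 := by
      rw [Q_eq hpm hn, mul_pow, hneg]
    push_cast [hQ4]
    ring
  have ha : ((aq n : ℚ) : ℚ_[p])
      = (((8*(n:ℤ)+1) * P n^4 : ℤ) : ℚ_[p]) / (((4^n * n.factorial : ℤ) : ℚ_[p]))^4 := by
    rw [aq_eq]
    push_cast
    ring
  rw [ha, hb, div_sub_div_same, norm_div, norm_pow, hden, one_pow, div_one]
  obtain ⟨c, hc⟩ := PQ_cong (p := p) n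
  have hPQ4 : P n^4 - Q p n^4 = (p:ℤ) * (c * (P n^3 + P n^2 * Q p n + P n * Q p n^2 + Q p n^3)) := by
    have : P n^4 - Q p n^4 = (P n - Q p n) * (P n^3 + P n^2 * Q p n + P n * Q p n^2 + Q p n^3) := by
      ring
    rw [this, hc]; ring
  calc ‖(((8*(n:ℤ)+1) * P n^4 : ℤ) : ℚ_[p]) - (((8*(n:ℤ)+1) * Q p n^4 : ℤ) : ℚ_[p])‖
      = ‖((((8*(n:ℤ)+1) * (P n^4 - Q p n^4) : ℤ)) : ℚ_[p])‖ := by push_cast; ring_nf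
  _ = ‖(((8*(n:ℤ)+1) : ℤ) : ℚ_[p])‖ * (‖((p:ℕ) : ℚ_[p])‖ * ‖((c * (P n^3 + P n^2 * Q p n + P n * Q p n^2 + Q p n^3) : ℤ) : ℚ_[p])‖) := by
      rw [hPQ4]; push_cast; rw [norm_mul, norm_mul]
  _ ≤ 1 * ((p:ℝ)⁻¹ * 1) := by
      refine mul_le_mul (Padic.norm_int_le_one _) ?_ (by positivity) zero_le_one
      rw [Padic.norm_p]
      refine mul_le_mul_of_nonneg_left (Padic.norm_int_le_one _) (by positivity)
  _ = (p:ℝ)⁻¹ := by ring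

lemma S0_norm (hp5 : 5 ≤ p) {m : ℕ} (hpm : p = 4*m+1) :
    ‖∑ n ∈ range (m+1), ((aq n : ℚ) : ℚ_[p])‖ ≤ (p:ℝ)⁻¹ := by
  have hsplit : ∑ n ∈ range (m+1), ((aq n : ℚ) : ℚ_[p])
      = (∑ n ∈ range (m+1), (((aq n : ℚ) : ℚ_[p]) - (((8*(n:ℤ)+1) * ((m.choose n : ℕ) : ℤ)^4 : ℤ) : ℚ_[p])))
        + ((∑ n ∈ range (m+1), (8*(n:ℤ)+1) * ((m.choose n : ℕ) : ℤ)^4 : ℤ) : ℚ_[p]) := by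
    rw [Int.cast_sum, ← Finset.sum_add_distrib]
    exact Finset.sum_congr rfl fun n _ => by ring
  rw [hsplit]
  have hpinv : (0:ℝ) ≤ (p:ℝ)⁻¹ := by positivity
  refine le_trans (Padic.nonarchimedean _ _) (max_le ?_ ?_)
  · exact my_norm_sum_le _ _ hpinv fun n hn => A_sub_b hp5 hpm (by
      rw [Finset.mem_range] at hn; omega)
  · rw [reflect_id hpm]
    push_cast
    rw [norm_mul, Padic.norm_p]
    have hB : ‖(∑ x ∈ range (m+1), ((m.choose x : ℚ_[p]))^4 : ℚ_[p])‖ ≤ 1 := by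
      refine my_norm_sum_le _ _ zero_le_one fun x _ => ?_
      rw [show ((m.choose x : ℚ_[p]))^4 = (((m.choose x ^ 4 : ℕ) : ℤ) : ℚ_[p]) by push_cast; ring]
      exact Padic.norm_int_le_one _
    exact le_trans (mul_le_mul_of_nonneg_left hB hpinv) (le_of_eq (mul_one _))

end

end Stmt15

namespace Stmt15

lemma key_ratCongr {p : ℕ} [hpf : Fact p.Prime] (q : ℚ) (h : ‖(q : ℚ_[p])‖ ≤ ((p:ℝ)⁻¹)^3) :
    ratCongr p 3 q 0 := by
  rcases eq_or_ne q 0 with h0 | h0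
  · exact Or.inl h0
  · right
    rw [sub_zero]
    rw [Padic.eq_padicNorm, padicNorm.eq_zpow_of_nonzero h0] at h
    have hp1 : (1:ℝ) < p := by exact_mod_cast hpf.out.one_lt
    have hp0 : (0:ℝ) < p := lt_trans one_pos hp1
    have hcast : (((p:ℚ)^(-padicValRat p q) : ℚ) : ℝ) = ((p:ℝ))^(-padicValRat p q) := by
      push_cast; ring
    rw [hcast] at h
    have h3 : ((p:ℝ)⁻¹)^3 = ((p:ℝ))^(-(3:ℤ)) := by
      rw [zpow_neg, ← zpow_natCast, ← inv_zpow]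
      norm_num
    rw [h3] at h
    have := (zpow_le_zpow_iff_right₀ hp1).1 h
    have hg : (3:ℤ) ≤ padicValRat p q := by linarith
    exact_mod_cast hg

end Stmt15

open Finset Stmt15

theorem stmt_15 (p : ℕ) (hp : p.Prime) (hmod : p % 4 = 1) :
    ratCongr p 3
      (∑ k ∈ Finset.range p, ∑ j ∈ Finset.range (k + 1), ∑ i ∈ Finset.range (k - j + 1),
        ((poch (1/4) (j)) ^ 4 / ((j).factorial : ℚ) ^ 4) *
          ((poch (1/4) (i)) ^ 4 / ((i).factorial : ℚ) ^ 4) *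
          ((poch (1/4) (k - j - i)) ^ 4 / ((k - j - i).factorial : ℚ) ^ 4) *
          (8 * ((i : ℕ) : ℚ) + 1) * (8 * ((j : ℕ) : ℚ) + 1) * (8 * ((k - j - i : ℕ) : ℚ) + 1))
      0 ∧
    ratCongr p 3
      (∑ k ∈ Finset.range p, ∑ j ∈ Finset.range (k + 1), ∑ i ∈ Finset.range (k - j + 1),
        ∑ h ∈ Finset.range (k - j - i + 1),
        ((poch (1/4) (j)) ^ 4 / ((j).factorial : ℚ) ^ 4) *
          ((poch (1/4) (i)) ^ 4 / ((i).factorial : ℚ) ^ 4) *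
          ((poch (1/4) (h)) ^ 4 / ((h).factorial : ℚ) ^ 4) *
          ((poch (1/4) (k - j - i - h)) ^ 4 / ((k - j - i - h).factorial : ℚ) ^ 4) *
          (8 * ((i : ℕ) : ℚ) + 1) * (8 * ((j : ℕ) : ℚ) + 1) * (8 * ((h : ℕ) : ℚ) + 1) * (8 * ((k - j - i - h : ℕ) : ℚ) + 1))
      0 := by
  haveI hpf : Fact p.Prime := ⟨hp⟩
  obtain ⟨m, hpm⟩ : ∃ m, p = 4*m+1 := ⟨p/4, by omega⟩
  have hp2 := hp.two_le
  have hp5 : 5 ≤ p := by omega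
  set A : ℕ → ℚ_[p] := fun n => ((aq n : ℚ) : ℚ_[p]) with hA
  have hA1 : ∀ n < p, ‖A n‖ ≤ 1 := fun n hn => A_norm_le_one hp5 hn
  have hA3 : ∀ n, m < n → n < p → ‖A n‖ ≤ ((p:ℝ)⁻¹)^3 :=
    fun n h1 h2 => A_norm_le_small hp5 hpm h1 h2
  have hpinv1 : (p:ℝ)⁻¹ ≤ 1 := by
    rw [inv_le_one_iff₀]; right; exact_mod_cast by omega
  have hfin : ∀ r : ℕ, 3 ≤ r → r*m+1 ≤ p → ‖Npow A r p‖ ≤ ((p:ℝ)⁻¹)^3 := by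
    intro r hr hrp
    have h1 := Npow_estimate hpm hA1 hA3 r p le_rfl hrp
    have h2 : ‖(∑ n ∈ range (m+1), A n)^r‖ ≤ ((p:ℝ)⁻¹)^3 := by
      rw [norm_pow]
      calc ‖∑ n ∈ range (m+1), A n‖^r ≤ ((p:ℝ)⁻¹)^r :=
            pow_le_pow_left₀ (norm_nonneg _) (S0_norm hp5 hpm) r
      _ ≤ ((p:ℝ)⁻¹)^3 := pow_le_pow_of_le_one (by positivity) hpinv1 hr
    calc ‖Npow A r p‖ = ‖(Npow A r p - (∑ n ∈ range (m+1), A n)^r) + (∑ n ∈ range (m+1), A n)^r‖ := by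
          rw [sub_add_cancel]
    _ ≤ max ‖Npow A r p - (∑ n ∈ range (m+1), A n)^r‖ ‖(∑ n ∈ range (m+1), A n)^r‖ :=
          Padic.nonarchimedean _ _
    _ ≤ ((p:ℝ)⁻¹)^3 := max_le h1 h2
  constructor
  · -- triple sum
    refine key_ratCongr _ ?_
    have step0 : ((((∑ k ∈ Finset.range p, ∑ j ∈ Finset.range (k + 1), ∑ i ∈ Finset.range (k - j + 1),
        ((poch (1/4) (j)) ^ 4 / ((j).factorial : ℚ) ^ 4) *
          ((poch (1/4) (i)) ^ 4 / ((i).factorial : ℚ) ^ 4) *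
          ((poch (1/4) (k - j - i)) ^ 4 / ((k - j - i).factorial : ℚ) ^ 4) *
          (8 * ((i : ℕ) : ℚ) + 1) * (8 * ((j : ℕ) : ℚ) + 1) * (8 * ((k - j - i : ℕ) : ℚ) + 1)) : ℚ)) : ℚ_[p])
        = ∑ k ∈ range p, ∑ j ∈ range (k+1), ∑ i ∈ range (k - j + 1),
            A j * (A i * A (k - j - i)) := by
      push_cast
      refine Finset.sum_congr rfl fun k _ => Finset.sum_congr rfl fun j _ =>
        Finset.sum_congr rfl fun i _ => ?_
      simp only [hA, aq]
      push_cast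
      ring
    rw [step0]
    have t1 : (∑ k ∈ range p, ∑ j ∈ range (k+1), ∑ i ∈ range (k - j + 1),
          A j * (A i * A (k - j - i)))
        = ∑ j ∈ range p, ∑ d ∈ range (p - j), ∑ i ∈ range (d + 1), A j * (A i * A (d - i)) :=
      sum_triangle (fun j d => ∑ i ∈ range (d+1), A j * (A i * A (d - i))) p
    have t2 : ∀ j, (∑ d ∈ range (p - j), ∑ i ∈ range (d + 1), A j * (A i * A (d - i)))
        = ∑ i ∈ range (p - j), ∑ e ∈ range (p - j - i), A j * (A i * A e) :=
      fun j => sum_triangle (fun i e => A j * (A i * A e)) (p - j)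
    have hN3 : Npow A 3 p = ∑ j ∈ range p, ∑ i ∈ range (p - j), ∑ e ∈ range (p - j - i),
        A j * (A i * A e) := by
      show (∑ j ∈ range p, A j * Npow A 2 (p - j)) = _
      refine Finset.sum_congr rfl fun j _ => ?_
      show A j * (∑ i ∈ range (p - j), A i * Npow A 1 (p - j - i)) = _
      rw [Finset.mul_sum]
      refine Finset.sum_congr rfl fun i _ => ?_
      show A j * (A i * ∑ e ∈ range (p - j - i), A e * Npow A 0 (p - j - i - e)) = _
      rw [Finset.mul_sum, Finset.mul_sum]
      refine Finset.sum_congr rfl fun e _ => ?_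
      show A j * (A i * (A e * 1)) = _
      rw [mul_one]
    rw [t1, Finset.sum_congr rfl fun j _ => t2 j, ← hN3]
    exact hfin 3 le_rfl (by omega)
  · -- quadruple sum
    refine key_ratCongr _ ?_
    have step0 : ((((∑ k ∈ Finset.range p, ∑ j ∈ Finset.range (k + 1), ∑ i ∈ Finset.range (k - j + 1),
        ∑ h ∈ Finset.range (k - j - i + 1),
        ((poch (1/4) (j)) ^ 4 / ((j).factorial : ℚ) ^ 4) *
          ((poch (1/4) (i)) ^ 4 / ((i).factorial : ℚ) ^ 4) *
          ((poch (1/4) (h)) ^ 4 / ((h).factorial : ℚ) ^ 4) *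
          ((poch (1/4) (k - j - i - h)) ^ 4 / ((k - j - i - h).factorial : ℚ) ^ 4) *
          (8 * ((i : ℕ) : ℚ) + 1) * (8 * ((j : ℕ) : ℚ) + 1) * (8 * ((h : ℕ) : ℚ) + 1) * (8 * ((k - j - i - h : ℕ) : ℚ) + 1)) : ℚ)) : ℚ_[p])
        = ∑ k ∈ range p, ∑ j ∈ range (k+1), ∑ i ∈ range (k - j + 1), ∑ h ∈ range (k - j - i + 1),
            A j * (A i * (A h * A (k - j - i - h))) := by
      push_cast
      refine Finset.sum_congr rfl fun k _ => Finset.sum_congr rfl fun j _ =>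
        Finset.sum_congr rfl fun i _ => Finset.sum_congr rfl fun h _ => ?_
      simp only [hA, aq]
      push_cast
      ring
    rw [step0]
    have t1 : (∑ k ∈ range p, ∑ j ∈ range (k+1), ∑ i ∈ range (k - j + 1), ∑ h ∈ range (k - j - i + 1),
          A j * (A i * (A h * A (k - j - i - h))))
        = ∑ j ∈ range p, ∑ d ∈ range (p - j), ∑ i ∈ range (d + 1), ∑ h ∈ range (d - i + 1),
            A j * (A i * (A h * A (d - i - h))) :=
      sum_triangle (fun j d => ∑ i ∈ range (d+1), ∑ h ∈ range (d - i + 1),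
        A j * (A i * (A h * A (d - i - h)))) p
    have t2 : ∀ j, (∑ d ∈ range (p - j), ∑ i ∈ range (d + 1), ∑ h ∈ range (d - i + 1),
          A j * (A i * (A h * A (d - i - h))))
        = ∑ i ∈ range (p - j), ∑ e ∈ range (p - j - i), ∑ h ∈ range (e + 1),
            A j * (A i * (A h * A (e - h))) :=
      fun j => sum_triangle (fun i e => ∑ h ∈ range (e + 1), A j * (A i * (A h * A (e - h)))) (p - j)
    have t3 : ∀ j i, (∑ e ∈ range (p - j - i), ∑ h ∈ range (e + 1),
          A j * (A i * (A h * A (e - h))))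
        = ∑ h ∈ range (p - j - i), ∑ l ∈ range (p - j - i - h), A j * (A i * (A h * A l)) :=
      fun j i => sum_triangle (fun h l => A j * (A i * (A h * A l))) (p - j - i)
    have hN4 : Npow A 4 p = ∑ j ∈ range p, ∑ i ∈ range (p - j), ∑ h ∈ range (p - j - i),
        ∑ l ∈ range (p - j - i - h), A j * (A i * (A h * A l)) := by
      show (∑ j ∈ range p, A j * Npow A 3 (p - j)) = _
      refine Finset.sum_congr rfl fun j _ => ?_
      show A j * (∑ i ∈ range (p - j), A i * Npow A 2 (p - j - i)) = _
      rw [Finset.mul_sum]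
      refine Finset.sum_congr rfl fun i _ => ?_
      show A j * (A i * ∑ h ∈ range (p - j - i), A h * Npow A 1 (p - j - i - h)) = _
      rw [Finset.mul_sum, Finset.mul_sum]
      refine Finset.sum_congr rfl fun h _ => ?_
      show A j * (A i * (A h * ∑ l ∈ range (p - j - i - h), A l * Npow A 0 (p - j - i - h - l))) = _
      rw [Finset.mul_sum, Finset.mul_sum, Finset.mul_sum]
      refine Finset.sum_congr rfl fun l _ => ?_
      show A j * (A i * (A h * (A l * 1))) = _
      rw [mul_one]
    rw [t1, Finset.sum_congr rfl fun j _ => t2 j,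
      Finset.sum_congr rfl fun j _ => Finset.sum_congr rfl fun i _ => t3 j i, ← hN4]
    exact hfin 4 (by norm_num) (by omega)
end

section
/- If p is a prime with p ≡ 1 (mod 4), then both of the following rational numbers are ≡ 0 (mod p^3): (i) ∑_{k=0}^{p−1} ∑_{j=0}^{k} ∑_{i=0}^{k−j} ((1/4)_j^4/(j!)^4)·((1/4)_i^4/(i!)^4)·((1/4)_{k−j−i}^4/((k−j−i)!)^4)·(8i+1)^3·(8j+1)^3·(8(k−j−i)+1)^3; and (ii) ∑_{k=0}^{p−1} ∑_{j=0}^{k} ∑_{i=0}^{k−j} ∑_{h=0}^{k−j−i} ((1/4)_j^4/(j!)^4)·((1/4)_i^4/(i!)^4)·((1/4)_h^4/(h!)^4)·((1/4)_{k−j−i−h}^4/((k−j−i−h)!)^4)·(8i+1)^3·(8j+1)^3·(8h+1)^3·(8(k−j−i−h)+1)^3. -/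
open Finset

namespace St18

/-! ### Basic definitions -/

def aq (m : ℕ) : ℚ := poch (1/4) m ^ 4 / ((m).factorial : ℚ) ^ 4 * (8 * m + 1) ^ 3

def Pn (k : ℕ) : ℕ := ∏ j ∈ range k, (4 * j + 1)

def Nm (m : ℕ) : ℕ := Pn m ^ 4 * (8 * m + 1) ^ 3
def Dm (m : ℕ) : ℕ := 4 ^ (4 * m) * (m.factorial) ^ 4
def cfac (p k : ℕ) : ℕ := (p-1).factorial / k.factorial
def NN (p k : ℕ) : ℕ := Nm k * 4 ^ (4 * (p - 1 - k)) * (cfac p k) ^ 4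
def Ntot (p : ℕ) : ℕ := ∑ k ∈ range p, NN p k
def Dtot (p : ℕ) : ℕ := 4 ^ (4 * (p-1)) * ((p-1).factorial) ^ 4
def Aq (p : ℕ) : ℚ := ∑ k ∈ range p, aq k

def W : ℕ → ℕ → ℚ
  | 0, _ => 1
  | d+1, r => ∑ j ∈ range r, aq j * W d (r - j)

def cv : ℕ → ℕ → ℚ
  | 0, k => aq k
  | d+1, k => ∑ j ∈ range (k+1), aq j * cv d (k - j)

lemma poch_eq (k : ℕ) : poch (1/4) k = (Pn k : ℚ) / 4 ^ k := by
  unfold poch Pn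
  rw [Nat.cast_prod,
    show (4:ℚ)^k = ∏ _j ∈ range k, 4 by rw [Finset.prod_const, card_range],
    ← Finset.prod_div_distrib]
  exact Finset.prod_congr rfl fun j _ => by push_cast; ring

lemma aq_eq (m : ℕ) : aq m = (Nm m : ℚ) / (Dm m : ℚ) := by
  unfold aq Nm Dm
  rw [poch_eq]
  have h4 : ((4:ℚ)^m) ≠ 0 := by positivity
  have hf : ((m.factorial : ℚ)) ≠ 0 := by
    exact_mod_cast Nat.cast_ne_zero.mpr m.factorial_ne_zero
  field_simp
  ring_nf
  push_cast; ring

lemma cfac_spec {p k : ℕ} (hk : k ≤ p - 1) : k.factorial * cfac p k = (p-1).factorial :=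
  Nat.mul_div_cancel' (Nat.factorial_dvd_factorial hk) 

lemma aq_mul_Dtot {p k : ℕ} (hp1 : 1 ≤ p) (hk : k < p) :
    aq k * (Dtot p : ℚ) = (NN p k : ℚ) := by
  have hDk : Dm k * NN p k = Nm k * Dtot p := by
    unfold Dm NN Dtot
    have h1 : (4:ℕ) ^ (4*k) * 4 ^ (4*(p-1-k)) = 4 ^ (4*(p-1)) := by
      rw [← pow_add]; congr 1; omega
    calc 4^(4*k) * k.factorial^4 * (Nm k * 4^(4*(p-1-k)) * cfac p k ^4)
        = Nm k * (4^(4*k) * 4^(4*(p-1-k))) * (k.factorial * cfac p k)^4 := by ring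
      _ = Nm k * 4^(4*(p-1)) * ((p-1).factorial)^4 := by
          rw [h1, cfac_spec (by omega)]
      _ = _ := by ring
  have hDm : ((Dm k : ℕ) : ℚ) ≠ 0 := by
    have : 0 < Dm k := Nat.mul_pos (Nat.pow_pos (n := _) (by norm_num)) (Nat.pow_pos (n := _) k.factorial_pos)
    exact Nat.cast_ne_zero.mpr (by omega)
  rw [aq_eq, div_mul_eq_mul_div, div_eq_iff hDm]
  exact_mod_cast hDk.symm.trans (mul_comm (Dm k) (NN p k))

/-! ### sums of convolutions -/

lemma sum_conv (g : ℕ → ℚ) (m : ℕ) :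
    ∑ k ∈ range m, ∑ j ∈ range (k+1), aq j * g (k - j)
      = ∑ j ∈ range m, aq j * ∑ l ∈ range (m - j), g l := by
  have h1 : ∑ k ∈ range m, ∑ j ∈ range (k+1), aq j * g (k - j)
      = ∑ j ∈ range m, ∑ k ∈ Finset.Ico j m, aq j * g (k - j) := by
    simp_rw [Finset.range_eq_Ico]
    rw [← Finset.sum_Ico_Ico_comm]
  rw [h1]
  apply Finset.sum_congr rfl
  intro j hj
  rw [Finset.sum_Ico_eq_sum_range, Finset.mul_sum]
  apply Finset.sum_congr rfl
  intro l hl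
  simp

lemma sum_cv_eq_W (d m : ℕ) : ∑ k ∈ range m, cv d k = W (d+1) m := by
  induction d generalizing m with
  | zero =>
    show _ = ∑ j ∈ range m, aq j * W 0 (m - j)
    simp [W, cv]
  | succ d ih =>
    show ∑ k ∈ range m, ∑ j ∈ range (k+1), aq j * cv d (k - j) = _
    rw [sum_conv]
    show _ = ∑ j ∈ range m, aq j * W (d+1) (m - j)
    exact Finset.sum_congr rfl fun j _ => by rw [ih]

/-! ### p-adic norm toolkit -/

section Padic
variable {p : ℕ} [hp : Fact p.Prime]

lemma norm_sum_le {ι : Type*} (s : Finset ι) (F : ι → ℚ_[p]) {c : ℝ} (hc : 0 ≤ c)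
    (h : ∀ i ∈ s, ‖F i‖ ≤ c) : ‖∑ i ∈ s, F i‖ ≤ c := by
  induction s using Finset.cons_induction with
  | empty => simpa using hc
  | cons a s ha ih =>
    rw [Finset.sum_cons]
    exact le_trans (Padic.nonarchimedean _ _)
      (max_le (h a (Finset.mem_cons_self _ _)) (ih fun i hi => h i (Finset.mem_cons_of_mem hi)))

lemma norm_nat_le_one (z : ℕ) : ‖((z : ℕ) : ℚ_[p])‖ ≤ 1 := by
  have := Padic.norm_int_le_one (p := p) (z : ℤ)
  push_cast at this ⊢
  exact this

lemma norm_nat_unit {z : ℕ} (hz : ¬ p ∣ z) : ‖((z : ℕ) : ℚ_[p])‖ = 1 := by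
  refine le_antisymm (norm_nat_le_one z) ?_
  by_contra hlt
  push_neg at hlt
  have : ‖((z : ℤ) : ℚ_[p])‖ < 1 := by push_cast; exact hlt
  rw [Padic.norm_intCast_lt_one_iff] at this
  exact hz (by exact_mod_cast this)

lemma norm_nat_le_pow {z : ℕ} {m : ℕ} (hz : p ^ m ∣ z) :
    ‖((z : ℕ) : ℚ_[p])‖ ≤ (p : ℝ) ^ (-(m:ℤ)) := by
  have := (Padic.norm_int_le_pow_iff_dvd (p := p) (z : ℤ) m).mpr (by exact_mod_cast hz)
  push_cast at this ⊢
  exact this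

lemma norm_sub_le_max (x y : ℚ_[p]) : ‖x - y‖ ≤ max ‖x‖ ‖y‖ := by
  rw [sub_eq_add_neg]
  simpa using Padic.nonarchimedean x (-y)

lemma mul_norm_le₁ {x y : ℚ_[p]} {c : ℝ} (h1 : ‖x‖ ≤ c) (h2 : ‖y‖ ≤ 1) (hc : 0 ≤ c) :
    ‖x * y‖ ≤ c := by
  rw [norm_mul]
  calc ‖x‖ * ‖y‖ ≤ c * 1 := mul_le_mul h1 h2 (norm_nonneg _) hc
    _ = c := mul_one c

lemma mul_norm_le₂ {x y : ℚ_[p]} {c : ℝ} (h1 : ‖x‖ ≤ 1) (h2 : ‖y‖ ≤ c) (hc : 0 ≤ c) :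
    ‖x * y‖ ≤ c := by
  rw [mul_comm]; exact mul_norm_le₁ h2 h1 hc

lemma ratCongr_of_norm (S : ℚ) (h : ‖((S : ℚ) : ℚ_[p])‖ ≤ (p:ℝ)^(-(3:ℤ))) :
    ratCongr p 3 S 0 := by
  by_cases hS : S = 0
  · exact Or.inl hS
  · right
    rw [sub_zero]
    have h1 : ‖((S : ℚ) : ℚ_[p])‖ = ((padicNorm p S : ℚ) : ℝ) := by
      exact_mod_cast Padic.eq_padicNorm (p := p) S
    rw [padicNorm.eq_zpow_of_nonzero hS] at h1
    push_cast at h1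
    rw [h1] at h
    have hp1 : (1:ℝ) < p := by exact_mod_cast hp.out.one_lt
    have := (zpow_le_zpow_iff_right₀ hp1).mp h
    omega

end Padic

/-! ### main section -/

section Main
variable {p : ℕ} [hp : Fact p.Prime] {n : ℕ} (hpn : p = 4 * n + 1)

include hpn

lemma hp5 : 5 ≤ p ∧ 1 ≤ n := by
  have h2 := hp.out.two_le
  constructor
  · rcases Nat.lt_or_ge p 5 with h | h
    · interval_cases p <;> omega
    · exact h
  · omega

lemma fac_ne_zero {m : ℕ} (hm : m < p) : ((m.factorial : ℕ) : ZMod p) ≠ 0 := by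
  rw [Ne, ZMod.natCast_eq_zero_iff, Nat.Prime.dvd_factorial hp.out]
  omega

lemma Pn_id : ∀ k, k ≤ n → ((Pn k : ℕ) : ZMod p) * ((n - k).factorial : ℕ) = (-4)^k * ((n.factorial : ℕ) : ZMod p) := by
  intro k
  induction k with
  | zero => intro _; simp [Pn]
  | succ k ih =>
    intro hk
    have hk' : k ≤ n := by omega
    have h1 : ((4*k+1 : ℕ) : ZMod p) = -4 * ((n - k : ℕ) : ZMod p) := by
      have hsum : (4*k+1) + 4*(n-k) = p := by omega
      have : (((4*k+1) + 4*(n-k) : ℕ) : ZMod p) = 0 := by rw [hsum]; exact ZMod.natCast_self p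
      push_cast at this ⊢
      linear_combination this
    have hfac : ((n - k).factorial : ℕ) = (n - k) * (n - (k+1)).factorial := by
      have h2 : n - k = (n - (k+1)) + 1 := by omega
      rw [h2, Nat.factorial_succ]
    have hPn : Pn (k+1) = Pn k * (4*k+1) := by
      unfold Pn; rw [Finset.prod_range_succ]
    calc ((Pn (k+1) : ℕ) : ZMod p) * ((n - (k+1)).factorial : ℕ)
        = ((Pn k : ℕ) : ZMod p) * ((4*k+1 : ℕ) : ZMod p) * ((n - (k+1)).factorial : ℕ) := by
          rw [hPn]; push_cast; ring
      _ = ((Pn k : ℕ) : ZMod p) * (-4 * ((n - k : ℕ) : ZMod p)) * ((n - (k+1)).factorial : ℕ) := by rw [h1]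
      _ = -4 * (((Pn k : ℕ) : ZMod p) * (((n - k).factorial : ℕ) : ZMod p)) := by
          rw [hfac]; push_cast; ring
      _ = (-4)^(k+1) * ((n.factorial : ℕ) : ZMod p) := by rw [ih hk']; ring

def ee (p n k : ℕ) : ZMod p := ((8*k+1 : ℕ) : ZMod p)^3 * ((n.choose k : ℕ) : ZMod p)^4

lemma ee_anti {k : ℕ} (hk : k ≤ n) : ee p n (n - k) = - ee p n k := by
  unfold ee
  have h1 : ((8*(n-k)+1 : ℕ) : ZMod p) = -((8*k+1 : ℕ) : ZMod p) := by
    have hsum : (8*(n-k)+1) + (8*k+1) = 2*p := by omega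
    have : (((8*(n-k)+1) + (8*k+1) : ℕ) : ZMod p) = ((2*p : ℕ) : ZMod p) := by rw [hsum]
    push_cast [ZMod.natCast_self] at this ⊢
    linear_combination this
  rw [Nat.choose_symm hk]
  push_cast at h1 ⊢
  linear_combination (((8*((n-k : ℕ) : ZMod p)+1)^2 - (8*((n-k : ℕ) : ZMod p)+1)*(8*(k : ZMod p)+1) + (8*(k : ZMod p)+1)^2) * ((n.choose k : ℕ) : ZMod p)^4) * h1

lemma sum_ee_zero : ∑ k ∈ range (n+1), ee p n k = 0 := by
  have h2 : (2 : ZMod p) ≠ 0 := by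
    have : ((2:ℕ) : ZMod p) ≠ 0 := by
      rw [Ne, ZMod.natCast_eq_zero_iff]
      intro h
      have := Nat.le_of_dvd (by norm_num) h
      have := hp.out.two_le
      omega
    simpa using this
  have hrefl := Finset.sum_range_reflect (fun k => ee p n k) (n+1)
  have heq : ∑ k ∈ range (n+1), ee p n (n - k) = ∑ k ∈ range (n+1), ee p n k := by
    simpa using hrefl
  have hneg : ∑ k ∈ range (n+1), ee p n (n - k) = - ∑ k ∈ range (n+1), ee p n k := by
    rw [← Finset.sum_neg_distrib]
    exact Finset.sum_congr rfl fun k hk => ee_anti hpn (by simp at hk; omega)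
  have h0 : (2 : ZMod p) * ∑ k ∈ range (n+1), ee p n k = 0 := by
    rw [two_mul]
    nth_rewrite 1 [← heq]
    rw [hneg]; ring
  rcases mul_eq_zero.mp h0 with h | h
  · exact absurd h h2
  · exact h

lemma NN_cast {k : ℕ} (hk : k ≤ n) :
    ((NN p k : ℕ) : ZMod p) = ee p n k * ((4 : ZMod p) ^ (4*(p-1)) * (((p-1).factorial : ℕ) : ZMod p)^4) := by
  have hkp : k ≤ p - 1 := by omega
  have hnkp : n - k < p := by omega
  have hkltp : k < p := by omega
  have hunit : ((k.factorial * (n-k).factorial : ℕ) : ZMod p) ≠ 0 := by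
    push_cast
    exact mul_ne_zero (fac_ne_zero hpn hkltp) (fac_ne_zero hpn hnkp)
  have hchoose : ((n.choose k : ℕ) : ZMod p) * ((k.factorial * (n-k).factorial : ℕ) : ZMod p) = ((n.factorial : ℕ) : ZMod p) := by
    rw [← Nat.cast_mul, ← mul_assoc, Nat.choose_mul_factorial_mul_factorial hk]
  have hPn := Pn_id hpn k hk
  have hcf : ((cfac p k : ℕ) : ZMod p) * ((k.factorial : ℕ) : ZMod p) = (((p-1).factorial : ℕ) : ZMod p) := by
    rw [← Nat.cast_mul, mul_comm (cfac p k), cfac_spec hkp]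
  have hpow : (4 : ZMod p) ^ (4*k) * (4 : ZMod p) ^ (4*(p-1-k)) = (4 : ZMod p) ^ (4*(p-1)) := by
    rw [← pow_add]
    congr 1
    omega
  apply mul_right_cancel₀ (pow_ne_zero 4 hunit)
  unfold NN Nm
  push_cast [ee]
  push_cast at hchoose hPn hcf
  calc (Pn k : ZMod p)^4 * (8*(k : ZMod p)+1)^3 * (4:ZMod p)^(4*(p-1-k)) * ((cfac p k : ℕ) : ZMod p)^4
        * ((k.factorial : ZMod p) * ((n-k).factorial : ZMod p))^4
      = (8*(k : ZMod p)+1)^3 * ((Pn k : ZMod p) * ((n-k).factorial : ZMod p))^4 * (4:ZMod p)^(4*(p-1-k))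
        * (((cfac p k : ℕ) : ZMod p) * (k.factorial : ZMod p))^4 := by push_cast; ring
    _ = (8*(k : ZMod p)+1)^3 * ((-4)^k * (n.factorial : ZMod p))^4 * (4:ZMod p)^(4*(p-1-k))
        * (((p-1).factorial : ZMod p))^4 := by rw [hPn, hcf]
    _ = (8*(k : ZMod p)+1)^3 * (n.factorial : ZMod p)^4 * ((4:ZMod p)^(4*k) * (4:ZMod p)^(4*(p-1-k)))
        * (((p-1).factorial : ZMod p))^4 := by
          have : ((-4 : ZMod p)^k)^4 = (4:ZMod p)^(4*k) := by
            rw [← pow_mul, show k*4 = 4*k by ring, pow_mul, pow_mul]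
            norm_num
          rw [mul_pow, this]; ring
    _ = (8*(k : ZMod p)+1)^3 * (n.factorial : ZMod p)^4 * (4:ZMod p)^(4*(p-1))
        * (((p-1).factorial : ZMod p))^4 := by rw [hpow]
    _ = (8*(k : ZMod p)+1)^3 * ((n.choose k : ZMod p) * ((k.factorial : ZMod p) * ((n-k).factorial : ZMod p)))^4
        * (4:ZMod p)^(4*(p-1)) * (((p-1).factorial : ZMod p))^4 := by rw [hchoose]
    _ = _ := by push_cast; ring

lemma NN_cast_zero {k : ℕ} (hk1 : n < k) (hk2 : k < p) : ((NN p k : ℕ) : ZMod p) = 0 := by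
  have hd : p ∣ Pn k := by
    have : (4 * n + 1) ∣ Pn k := Finset.dvd_prod_of_mem _ (Finset.mem_range.mpr hk1)
    rwa [← hpn] at this
  have : p ∣ NN p k := by
    unfold NN Nm
    exact (((hd.trans (dvd_pow_self (Pn k) (by norm_num))).mul_right _).mul_right _).mul_right _
  rwa [ZMod.natCast_eq_zero_iff]

lemma dvd_Ntot : p ∣ Ntot p := by
  rw [← ZMod.natCast_eq_zero_iff]
  unfold Ntot
  push_cast
  have hnp : n + 1 ≤ p := by omega
  rw [← Finset.sum_subset (Finset.range_subset_range.mpr hnp) (by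
    intro k hk1 hk2
    simp only [Finset.mem_range] at hk1 hk2
    exact_mod_cast NN_cast_zero hpn (by omega) hk1)]
  calc ∑ k ∈ range (n+1), ((NN p k : ℕ) : ZMod p)
      = ∑ k ∈ range (n+1), ee p n k * ((4 : ZMod p) ^ (4*(p-1)) * (((p-1).factorial : ℕ) : ZMod p)^4) := by
        exact Finset.sum_congr rfl fun k hk => NN_cast hpn (by simp at hk; omega)
    _ = (∑ k ∈ range (n+1), ee p n k) * _ := by rw [Finset.sum_mul]
    _ = 0 := by rw [sum_ee_zero hpn, zero_mul]

/-! ### norm bounds -/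

lemma not_dvd_Dm {m : ℕ} (hm : m < p) : ¬ p ∣ Dm m := by
  intro hdvd
  unfold Dm at hdvd
  rcases (Nat.Prime.dvd_mul hp.out).mp hdvd with h | h
  · have h1 : p ∣ 4 := Nat.Prime.dvd_of_dvd_pow hp.out h
    have := Nat.le_of_dvd (by norm_num) h1
    have := hp.out.two_le
    omega
  · have := Nat.Prime.dvd_of_dvd_pow hp.out h
    rw [Nat.Prime.dvd_factorial hp.out] at this
    omega

lemma norm_Dm {m : ℕ} (hm : m < p) : ‖((Dm m : ℕ) : ℚ_[p])‖ = 1 :=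
  norm_nat_unit (not_dvd_Dm hpn hm)

lemma norm_aq_le_one {m : ℕ} (hm : m < p) : ‖((aq m : ℚ) : ℚ_[p])‖ ≤ 1 := by
  rw [aq_eq]
  push_cast
  rw [norm_div, norm_Dm hpn hm, div_one]
  exact_mod_cast norm_nat_le_one (Nm m)

lemma dvd_Pn {m : ℕ} (hm : n < m) : p ∣ Pn m := by
  have : (4 * n + 1) ∣ Pn m := Finset.dvd_prod_of_mem _ (Finset.mem_range.mpr hm)
  rwa [← hpn] at this

lemma norm_aq_small {m : ℕ} (hm1 : n < m) (hm2 : m < p) :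
    ‖((aq m : ℚ) : ℚ_[p])‖ ≤ (p : ℝ) ^ (-(4:ℤ)) := by
  rw [aq_eq]
  push_cast
  rw [norm_div, norm_Dm hpn hm2, div_one]
  have : (p : ℕ) ^ 4 ∣ Nm m := by
    unfold Nm
    exact Dvd.dvd.mul_right (pow_dvd_pow_of_dvd (dvd_Pn hpn hm1) 4) _
  exact_mod_cast norm_nat_le_pow (p := p) this

lemma norm_Aq_le_one : ‖((Aq p : ℚ) : ℚ_[p])‖ ≤ 1 := by
  unfold Aq
  push_cast
  exact norm_sum_le _ _ zero_le_one fun k hk =>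
    norm_aq_le_one hpn (Finset.mem_range.mp hk)

lemma norm_Aq : ‖((Aq p : ℚ) : ℚ_[p])‖ ≤ (p : ℝ) ^ (-(1:ℤ)) := by
  have hp1 : 1 ≤ p := hp.out.one_lt.le
  have hAD : Aq p * (Dtot p : ℚ) = (Ntot p : ℚ) := by
    unfold Aq Ntot
    push_cast
    rw [Finset.sum_mul]
    exact Finset.sum_congr rfl fun k hk => by
      exact_mod_cast aq_mul_Dtot hp1 (Finset.mem_range.mp hk)
  have hDtot : ¬ p ∣ Dtot p := by
    intro hdvd
    unfold Dtot at hdvd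
    rcases (Nat.Prime.dvd_mul hp.out).mp hdvd with h | h
    · have h1 : p ∣ 4 := Nat.Prime.dvd_of_dvd_pow hp.out h
      have := Nat.le_of_dvd (by norm_num) h1
      have := hp.out.two_le
      omega
    · have := Nat.Prime.dvd_of_dvd_pow hp.out h
      rw [Nat.Prime.dvd_factorial hp.out] at this
      omega
  have hN : ‖((Ntot p : ℕ) : ℚ_[p])‖ ≤ (p : ℝ) ^ (-(1:ℤ)) := by
    have : p ^ 1 ∣ Ntot p := by simpa using dvd_Ntot hpn
    exact_mod_cast norm_nat_le_pow (p := p) this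
  have hcast : ((Aq p : ℚ) : ℚ_[p]) * ((Dtot p : ℕ) : ℚ_[p]) = ((Ntot p : ℕ) : ℚ_[p]) := by
    have := congrArg (fun z : ℚ => (z : ℚ_[p])) hAD
    push_cast at this ⊢
    exact this
  have hnormD : ‖((Dtot p : ℕ) : ℚ_[p])‖ = 1 := norm_nat_unit hDtot
  calc ‖((Aq p : ℚ) : ℚ_[p])‖ = ‖((Aq p : ℚ) : ℚ_[p])‖ * ‖((Dtot p : ℕ) : ℚ_[p])‖ := by
        rw [hnormD, mul_one]
    _ = ‖((Ntot p : ℕ) : ℚ_[p])‖ := by rw [← norm_mul, hcast]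
    _ ≤ _ := hN

lemma norm_W_le_one : ∀ d r, r ≤ p → ‖((W d r : ℚ) : ℚ_[p])‖ ≤ 1 := by
  intro d
  induction d with
  | zero => intro r hr; simp [W]
  | succ d ih =>
    intro r hr
    show ‖((∑ j ∈ range r, aq j * W d (r - j) : ℚ) : ℚ_[p])‖ ≤ 1
    push_cast
    refine norm_sum_le _ _ zero_le_one fun j hj => ?_
    have hj' := Finset.mem_range.mp hj
    exact mul_norm_le₁ (norm_aq_le_one hpn (by omega)) (ih (r - j) (by omega)) zero_le_one

omit hpn in
lemma pow4_nonneg : (0:ℝ) ≤ (p : ℝ) ^ (-(4:ℤ)) := by positivity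

lemma W_step (d s : ℕ) (hs : s ≤ 3)
    (ih : ∀ r, r ≤ p → p ≤ r + (s+1)*n → ‖((Aq p ^ d - W d r : ℚ) : ℚ_[p])‖ ≤ (p:ℝ)^(-(4:ℤ)))
    (r : ℕ) (hr : r ≤ p) (hrn : p ≤ r + s*n) :
    ‖((Aq p ^ (d+1) - W (d+1) r : ℚ) : ℚ_[p])‖ ≤ (p:ℝ)^(-(4:ℤ)) := by
  have hsn : s*n ≤ 3*n := Nat.mul_le_mul_right n hs
  have hr3 : p ≤ r + 3*n := le_trans hrn (Nat.add_le_add_left hsn r)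
  have hrlow : n < r := by omega
  have hsplit : Aq p ^ (d+1) - W (d+1) r
      = (∑ j ∈ Finset.Ico r p, aq j * Aq p ^ d)
        + ∑ j ∈ range r, (aq j * Aq p ^ d - aq j * W d (r - j)) := by
    have h1 : Aq p ^ (d+1) = ∑ j ∈ range p, aq j * Aq p ^ d := by
      rw [pow_succ', Aq, Finset.sum_mul]
    have h2 : ∑ j ∈ range p, aq j * Aq p ^ d
        = (∑ j ∈ range r, aq j * Aq p ^ d) + ∑ j ∈ Finset.Ico r p, aq j * Aq p ^ d := by
      rw [Finset.range_eq_Ico, ← Finset.sum_Ico_consecutive _ (Nat.zero_le r) hr,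
        ← Finset.range_eq_Ico]
    have h3 : W (d+1) r = ∑ j ∈ range r, aq j * W d (r - j) := rfl
    rw [h1, h2, h3, Finset.sum_sub_distrib]
    ring
  rw [hsplit]
  push_cast
  refine le_trans (Padic.nonarchimedean _ _) (max_le ?_ ?_)
  · refine norm_sum_le _ _ pow4_nonneg fun j hj => ?_
    obtain ⟨hj1, hj2⟩ := Finset.mem_Ico.mp hj
    refine mul_norm_le₁ (norm_aq_small hpn (by omega) hj2) ?_ pow4_nonneg
    rw [norm_pow]
    exact pow_le_one₀ (norm_nonneg _) (norm_Aq_le_one hpn)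
  · refine norm_sum_le _ _ pow4_nonneg fun j hj => ?_
    have hj' := Finset.mem_range.mp hj
    have hterm : ((aq j : ℚ) : ℚ_[p]) * ((Aq p : ℚ) : ℚ_[p]) ^ d - ((aq j : ℚ) : ℚ_[p]) * ((W d (r-j) : ℚ) : ℚ_[p])
        = ((aq j : ℚ) : ℚ_[p]) * (((Aq p ^ d - W d (r - j) : ℚ)) : ℚ_[p]) := by
      push_cast
      ring
    rw [hterm]
    rcases le_or_gt j n with hjn | hjn
    · refine mul_norm_le₂ (norm_aq_le_one hpn (by omega)) ?_ pow4_nonneg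
      refine ih (r - j) (by omega) ?_
      have heq : r - j + (s+1) * n = (r - j + n) + s * n := by ring
      rw [heq]
      calc p ≤ r + s*n := hrn
        _ ≤ (r - j + n) + s*n := Nat.add_le_add_right (by omega) _
    · refine mul_norm_le₁ (norm_aq_small hpn hjn (by omega)) ?_ pow4_nonneg
      have hd : ‖(((Aq p ^ d - W d (r - j) : ℚ)) : ℚ_[p])‖ ≤ 1 := by
        push_cast
        refine le_trans (norm_sub_le_max _ _) (max_le ?_ ?_)
        · rw [norm_pow]
          exact pow_le_one₀ (norm_nonneg _) (norm_Aq_le_one hpn)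
        · exact norm_W_le_one hpn d (r - j) (by omega)
      exact hd

lemma W_diff : ∀ d, d ≤ 4 → ∀ r, r ≤ p → p ≤ r + (4 - d)*n →
    ‖((Aq p ^ d - W d r : ℚ) : ℚ_[p])‖ ≤ (p:ℝ)^(-(4:ℤ)) := by
  intro d
  induction d with
  | zero =>
    intro _ r hr hrn
    have h0 : ((Aq p ^ 0 - W 0 r : ℚ) : ℚ_[p]) = 0 := by simp [W]
    rw [h0, norm_zero]
    positivity
  | succ d ih =>
    intro hd4 r hr hrn
    have hd' : d ≤ 4 := by omega
    have hs : 4 - (d+1) ≤ 3 := by omega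
    refine W_step hpn d (4 - (d+1)) hs (fun r' hr' hrn' => ih hd' r' hr' ?_) r hr hrn
    have : 4 - (d+1) + 1 = 4 - d := by omega
    rwa [this] at hrn'

lemma norm_W_final (d : ℕ) (hd1 : 3 ≤ d) (hd4 : d ≤ 4) :
    ‖((W d p : ℚ) : ℚ_[p])‖ ≤ (p:ℝ)^(-(3:ℤ)) := by
  have hp1 : (1:ℝ) ≤ p := by exact_mod_cast hp.out.one_lt.le
  have h43 : ((p:ℝ))^(-(4:ℤ)) ≤ (p:ℝ)^(-(3:ℤ)) :=
    zpow_le_zpow_right₀ hp1 (by norm_num)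
  have hdiff := W_diff hpn d hd4 p le_rfl (Nat.le_add_right p _)
  have hAd : ‖(((Aq p ^ d : ℚ)) : ℚ_[p])‖ ≤ (p:ℝ)^(-(3:ℤ)) := by
    push_cast
    rw [norm_pow]
    calc ‖((Aq p : ℚ) : ℚ_[p])‖ ^ d ≤ ((p:ℝ)^(-(1:ℤ))) ^ d := by
          exact pow_le_pow_left₀ (norm_nonneg _) (norm_Aq hpn) d
      _ = (p:ℝ)^(-(d:ℤ)) := by
          rw [← zpow_natCast ((p:ℝ)^(-(1:ℤ))) d, ← zpow_mul]
          congr 1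
          omega
      _ ≤ (p:ℝ)^(-(3:ℤ)) := zpow_le_zpow_right₀ hp1 (by omega)
  have hWd : ((W d p : ℚ) : ℚ_[p]) = ((Aq p ^ d : ℚ) : ℚ_[p]) - ((Aq p ^ d - W d p : ℚ) : ℚ_[p]) := by
    push_cast
    ring
  rw [hWd]
  exact le_trans (norm_sub_le_max _ _) (max_le hAd (le_trans hdiff h43))

end Main
end St18

open St18 in
theorem stmt_18 (p : ℕ) (hp : p.Prime) (hmod : p % 4 = 1) :
    ratCongr p 3
      (∑ k ∈ Finset.range p, ∑ j ∈ Finset.range (k + 1), ∑ i ∈ Finset.range (k - j + 1),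
        ((poch (1/4) (j)) ^ 4 / ((j).factorial : ℚ) ^ 4) *
          ((poch (1/4) (i)) ^ 4 / ((i).factorial : ℚ) ^ 4) *
          ((poch (1/4) (k - j - i)) ^ 4 / ((k - j - i).factorial : ℚ) ^ 4) *
          (8 * ((i : ℕ) : ℚ) + 1) ^ 3 * (8 * ((j : ℕ) : ℚ) + 1) ^ 3 * (8 * ((k - j - i : ℕ) : ℚ) + 1) ^ 3)
      0 ∧
    ratCongr p 3
      (∑ k ∈ Finset.range p, ∑ j ∈ Finset.range (k + 1), ∑ i ∈ Finset.range (k - j + 1),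
        ∑ h ∈ Finset.range (k - j - i + 1),
        ((poch (1/4) (j)) ^ 4 / ((j).factorial : ℚ) ^ 4) *
          ((poch (1/4) (i)) ^ 4 / ((i).factorial : ℚ) ^ 4) *
          ((poch (1/4) (h)) ^ 4 / ((h).factorial : ℚ) ^ 4) *
          ((poch (1/4) (k - j - i - h)) ^ 4 / ((k - j - i - h).factorial : ℚ) ^ 4) *
          (8 * ((i : ℕ) : ℚ) + 1) ^ 3 * (8 * ((j : ℕ) : ℚ) + 1) ^ 3 * (8 * ((h : ℕ) : ℚ) + 1) ^ 3 * (8 * ((k - j - i - h : ℕ) : ℚ) + 1) ^ 3)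
      0 := by
  haveI : Fact p.Prime := ⟨hp⟩
  have hpn : p = 4 * (p / 4) + 1 := by omega
  set n := p / 4 with hn
  have hS3 : (∑ k ∈ Finset.range p, ∑ j ∈ Finset.range (k + 1), ∑ i ∈ Finset.range (k - j + 1),
        ((poch (1/4) (j)) ^ 4 / ((j).factorial : ℚ) ^ 4) *
          ((poch (1/4) (i)) ^ 4 / ((i).factorial : ℚ) ^ 4) *
          ((poch (1/4) (k - j - i)) ^ 4 / ((k - j - i).factorial : ℚ) ^ 4) *
          (8 * ((i : ℕ) : ℚ) + 1) ^ 3 * (8 * ((j : ℕ) : ℚ) + 1) ^ 3 * (8 * ((k - j - i : ℕ) : ℚ) + 1) ^ 3)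
      = W 3 p := by
    rw [← sum_cv_eq_W]
    refine Finset.sum_congr rfl fun k _ => ?_
    show _ = ∑ j ∈ range (k+1), aq j * cv 1 (k - j)
    refine Finset.sum_congr rfl fun j _ => ?_
    show _ = aq j * ∑ i ∈ range ((k-j)+1), aq i * cv 0 ((k-j) - i)
    rw [Finset.mul_sum]
    refine Finset.sum_congr rfl fun i _ => ?_
    show _ = aq j * (aq i * aq (k - j - i))
    unfold aq
    ring
  have hS4 : (∑ k ∈ Finset.range p, ∑ j ∈ Finset.range (k + 1), ∑ i ∈ Finset.range (k - j + 1),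
        ∑ h ∈ Finset.range (k - j - i + 1),
        ((poch (1/4) (j)) ^ 4 / ((j).factorial : ℚ) ^ 4) *
          ((poch (1/4) (i)) ^ 4 / ((i).factorial : ℚ) ^ 4) *
          ((poch (1/4) (h)) ^ 4 / ((h).factorial : ℚ) ^ 4) *
          ((poch (1/4) (k - j - i - h)) ^ 4 / ((k - j - i - h).factorial : ℚ) ^ 4) *
          (8 * ((i : ℕ) : ℚ) + 1) ^ 3 * (8 * ((j : ℕ) : ℚ) + 1) ^ 3 * (8 * ((h : ℕ) : ℚ) + 1) ^ 3 * (8 * ((k - j - i - h : ℕ) : ℚ) + 1) ^ 3)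
      = W 4 p := by
    rw [← sum_cv_eq_W]
    refine Finset.sum_congr rfl fun k _ => ?_
    show _ = ∑ j ∈ range (k+1), aq j * cv 2 (k - j)
    refine Finset.sum_congr rfl fun j _ => ?_
    show _ = aq j * ∑ i ∈ range ((k-j)+1), aq i * cv 1 ((k-j) - i)
    rw [Finset.mul_sum]
    refine Finset.sum_congr rfl fun i _ => ?_
    show _ = aq j * (aq i * ∑ h ∈ range ((k-j-i)+1), aq h * cv 0 ((k-j-i) - h))
    rw [Finset.mul_sum, Finset.mul_sum]
    refine Finset.sum_congr rfl fun h _ => ?_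
    show _ = aq j * (aq i * (aq h * aq (k - j - i - h)))
    unfold aq
    ring
  constructor
  · rw [hS3]
    exact ratCongr_of_norm _ (norm_W_final hpn 3 (by norm_num) (by norm_num))
  · rw [hS4]
    exact ratCongr_of_norm _ (norm_W_final hpn 4 (by norm_num) (by norm_num))
end
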